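/- arXiv:0906.5559 — 5 statements merged into one kernel-verified Lean document; each statement's English description precedes it below -/
import Mathlib

section
/- Sylvester's theorem on real zeros: suppose λ_1,...,λ_r are nonzero reals, γ_1 < ... < γ_r are real numbers with r ≥ 2, and Q(t) = Σ_k λ_k (t - γ_k)^d does not vanish identically. If the sequence (λ_1,...,λ_r,(-1)^d λ_1) has C changes of sign, then Q has at most C real zeros counted with multiplicity. -/
open Polynomial


lemma ev_rev (p : ℝ[X]) {y : ℝ} (hy : y ≠ 0) : (reverse p).eval y = y ^ p.natDegree * p.eval y⁻¹ := by
  have := invertibleOfNonzero (inv_ne_zero hy)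
  have h := eval₂_reverse_mul_pow (RingHom.id ℝ) y⁻¹ p
  simp only [eval₂_eq_eval_map, Polynomial.map_id, invOf_eq_inv, inv_inv] at h
  rw [← h, mul_comm (eval y p.reverse), ← mul_assoc, ← mul_pow]
  simp [mul_inv_cancel₀ hy]

lemma rev_pow (q : ℝ[X]) (m : ℕ) : reverse (q ^ m) = reverse q ^ m := by
  induction m with
  | zero => simp [reverse, reflect_one]
  | succ n ih => rw [pow_succ, reverse_mul_of_domain, ih, pow_succ]

lemma rev_linear {u : ℝ} (hu : u ≠ 0) : reverse (X - C u) = C (-u) * (X - C u⁻¹) := by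
  have h1 : natDegree (X - C u) = 1 := natDegree_X_sub_C u
  rw [reverse, h1]
  ext i
  rw [coeff_reflect]
  rcases i with _ | _ | i <;>
    simp [← revAtFun_eq, revAtFun, coeff_sub, mul_sub, ← C_mul, mul_inv_cancel₀ hu, coeff_one, coeff_C_mul,
      coeff_X] <;> norm_num

lemma nd_rev {p : ℝ[X]} (h0 : p.coeff 0 ≠ 0) : (reverse p).natDegree = p.natDegree := by
  refine le_antisymm p.reverse_natDegree_le (le_natDegree_of_ne_zero ?_)
  rwa [coeff_reverse, revAt_le le_rfl, Nat.sub_self]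

lemma rev_rev {p : ℝ[X]} (h0 : p.coeff 0 ≠ 0) : reverse (reverse p) = p := by
  have hnd := nd_rev h0
  rw [reverse, hnd, reverse]
  ext i
  rw [coeff_reflect, coeff_reflect, revAt_invol]

lemma dvd_rev {p : ℝ[X]} {u : ℝ} (hu : u ≠ 0) {m : ℕ} (h : (X - C u) ^ m ∣ p) :
    (X - C u⁻¹) ^ m ∣ reverse p := by
  obtain ⟨V, hV⟩ := h
  rw [hV, reverse_mul_of_domain, rev_pow, rev_linear hu, mul_pow]
  exact (dvd_mul_left _ _).mul_right _


lemma taylor_ne {p : ℝ[X]} (c : ℝ) (hp : p ≠ 0) : taylor c p ≠ 0 := by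
  intro h
  apply hp
  have h2 := congrArg (taylor (-c)) h
  rwa [taylor_taylor, neg_add_cancel, taylor_zero', LinearMap.id_apply, map_zero] at h2

lemma dvd_taylor {p : ℝ[X]} (c : ℝ) {x : ℝ} {m : ℕ} (h : (X - C x) ^ m ∣ p) :
    (X - C (x - c)) ^ m ∣ taylor c p := by
  obtain ⟨V, hV⟩ := h
  refine ⟨taylor c V, ?_⟩
  rw [hV, taylor_mul]
  congr 1
  rw [taylor_apply, pow_comp, sub_comp, X_comp, C_comp, C_sub]
  ring

lemma rm_taylor {p : ℝ[X]} (hp : p ≠ 0) (c x : ℝ) :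
    rootMultiplicity x p = rootMultiplicity (x - c) (taylor c p) := by
  have h1 : (X - C (x - c)) ^ rootMultiplicity x p ∣ taylor c p :=
    dvd_taylor c (pow_rootMultiplicity_dvd p x)
  have h2 : (X - C (x - c - -c)) ^ rootMultiplicity (x - c) (taylor c p) ∣ taylor (-c) (taylor c p) :=
    dvd_taylor (-c) (pow_rootMultiplicity_dvd (taylor c p) (x - c))
  rw [taylor_taylor, neg_add_cancel, taylor_zero', LinearMap.id_apply] at h2
  have hx : x - c - -c = x := by ring
  rw [hx] at h2
  exact le_antisymm ((le_rootMultiplicity_iff (taylor_ne c hp)).2 h1)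
    ((le_rootMultiplicity_iff hp).2 h2)

-- forward: rootMult x p ≤ rootMult (x-c)⁻¹ (reverse (taylor c p)), x ≠ c
lemma rm_rev_le {p : ℝ[X]} (hp : p ≠ 0) {c x : ℝ} (hx : x ≠ c) :
    rootMultiplicity x p ≤ rootMultiplicity (x - c)⁻¹ (reverse (taylor c p)) := by
  have hu : x - c ≠ 0 := sub_ne_zero.2 hx
  have h1 : (X - C (x - c)) ^ rootMultiplicity x p ∣ taylor c p :=
    dvd_taylor c (pow_rootMultiplicity_dvd p x)
  have h2 := dvd_rev hu h1
  exact (le_rootMultiplicity_iff (by simpa [reverse_eq_zero] using taylor_ne c hp)).2 h2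

-- backward: for y ≠ 0, rootMult y (reverse (taylor c p)) ≤ rootMult (c + y⁻¹) p, given p(c) ≠ 0
lemma rm_rev_ge {p : ℝ[X]} (hp : p ≠ 0) {c y : ℝ} (hy : y ≠ 0) (hc : p.eval c ≠ 0) :
    rootMultiplicity y (reverse (taylor c p)) ≤ rootMultiplicity (c + y⁻¹) p := by
  set q := taylor c p with hq
  have hq0 : q.coeff 0 ≠ 0 := by rwa [taylor_coeff_zero]
  have hqne : q ≠ 0 := taylor_ne c hp
  have h1 : (X - C y) ^ rootMultiplicity y (reverse q) ∣ reverse q :=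
    pow_rootMultiplicity_dvd _ _
  have h2 := dvd_rev hy h1
  rw [rev_rev hq0] at h2
  have h3 : rootMultiplicity y (reverse q) ≤ rootMultiplicity y⁻¹ q :=
    (le_rootMultiplicity_iff hqne).2 h2
  rw [rm_taylor hp c (c + y⁻¹)] at *
  simpa using h3


-- card of roots of p ≤ card of roots of reverse (taylor c p), given p(c) ≠ 0
lemma card_le_rev {p : ℝ[X]} (hp : p ≠ 0) {c : ℝ} (hc : p.eval c ≠ 0) :
    p.roots.card ≤ (reverse (taylor c p)).roots.card := by
  set B := reverse (taylor c p) with hB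
  have hB0 : B ≠ 0 := by simpa [hB, reverse_eq_zero] using taylor_ne c hp
  have hf : Function.Injective (fun x : ℝ => (x - c)⁻¹) :=
    inv_injective.comp (sub_left_injective)
  have hle : p.roots.map (fun x => (x - c)⁻¹) ≤ B.roots := by
    rw [Multiset.le_iff_count]
    intro y
    by_cases hy : y ∈ p.roots.map (fun x => (x - c)⁻¹)
    · obtain ⟨x, hxr, rfl⟩ := Multiset.mem_map.1 hy
      have hxc : x ≠ c := by
        intro h; subst h
        exact hc ((mem_roots hp).1 hxr)
      rw [Multiset.count_map_eq_count' _ _ hf, count_roots, count_roots]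
      exact rm_rev_le hp hxc
    · simp [Multiset.count_eq_zero_of_notMem hy]
  calc p.roots.card = (p.roots.map (fun x => (x - c)⁻¹)).card := (Multiset.card_map _ _).symm
    _ ≤ B.roots.card := Multiset.card_le_card hle

-- card of roots of reverse (taylor c R) ≤ card of roots of R, given R(c) ≠ 0
lemma card_rev_le {p : ℝ[X]} (hp : p ≠ 0) {c : ℝ} (hc : p.eval c ≠ 0) :
    (reverse (taylor c p)).roots.card ≤ p.roots.card := by
  set B := reverse (taylor c p) with hB
  have hB0 : B ≠ 0 := by simpa [hB, reverse_eq_zero] using taylor_ne c hp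
  have h0B : B.coeff 0 ≠ 0 := by
    rw [hB, coeff_zero_reverse]
    exact (mt leadingCoeff_eq_zero.1 (taylor_ne c hp))
  have hg : Function.Injective (fun y : ℝ => c + y⁻¹) := by
    intro a b hab
    simp only [add_right_inj] at hab
    exact inv_injective hab
  have hle : B.roots.map (fun y => c + y⁻¹) ≤ p.roots := by
    rw [Multiset.le_iff_count]
    intro z
    by_cases hz : z ∈ B.roots.map (fun y => c + y⁻¹)
    · obtain ⟨y, hyr, rfl⟩ := Multiset.mem_map.1 hz
      have hy0 : y ≠ 0 := by
        intro h; subst h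
        have := (mem_roots hB0).1 hyr
        rw [IsRoot, ← coeff_zero_eq_eval_zero] at this
        exact h0B this
      rw [Multiset.count_map_eq_count' _ _ hg, count_roots, count_roots]
      exact rm_rev_ge hp hy0 hc
    · simp [Multiset.count_eq_zero_of_notMem hz]
  calc B.roots.card = (B.roots.map (fun y => c + y⁻¹)).card := (Multiset.card_map _ _).symm
    _ ≤ p.roots.card := Multiset.card_le_card hle


lemma rolle_core {Q R : ℝ[X]} {c : ℝ} {D : ℕ} (hD : 1 ≤ D) (hQ0 : Q ≠ 0)
    (he : Q.natDegree ≤ D) (hc : Q.eval c ≠ 0)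
    (hR : R = derivative Q * (X - C c) - C (D : ℝ) * Q)
    (hR0 : R ≠ 0) (hf1 : Q.natDegree ≤ R.natDegree + 1) (hf2 : R.natDegree + 1 ≤ D) :
    Q.roots.card ≤ R.roots.card + 1 := by
  set e := Q.natDegree with he_def
  set f := R.natDegree with hf
  have hRc : R.eval c ≠ 0 := by
    rw [hR]
    simp only [eval_sub, eval_mul, eval_C, eval_X, sub_self, mul_zero, zero_sub, neg_ne_zero]
    exact mul_ne_zero (by positivity) hc
  set B : ℝ[X] := reverse (taylor c Q) with hB
  set B' : ℝ[X] := reverse (taylor c R) with hB'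
  have hB0 : B ≠ 0 := by simpa [hB, reverse_eq_zero] using taylor_ne c hQ0
  have hB'0 : B' ≠ 0 := by simpa [hB', reverse_eq_zero] using taylor_ne c hR0
  set P : ℝ[X] := X ^ (D - e) * B with hP
  have hP0 : P ≠ 0 := mul_ne_zero (pow_ne_zero _ X_ne_zero) hB0
  -- evaluation of P away from 0
  have hPev : ∀ y : ℝ, y ≠ 0 → P.eval y = y ^ D * Q.eval (c + y⁻¹) := by
    intro y hy
    rw [hP, eval_mul, eval_pow, eval_X, ev_rev _ hy, natDegree_taylor, taylor_eval,
      ← mul_assoc, ← pow_add, Nat.sub_add_cancel he, add_comm c]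
  have hB'ev : ∀ y : ℝ, y ≠ 0 → B'.eval y = y ^ f * R.eval (c + y⁻¹) := by
    intro y hy
    rw [hB', ev_rev _ hy, natDegree_taylor, taylor_eval, add_comm c]
  -- the key polynomial identity
  have hkey : derivative P = C (-1 : ℝ) * (X ^ (D - 1 - f) * B') := by
    apply eq_of_infinite_eval_eq
    apply Set.Infinite.mono (s := ({0}ᶜ : Set ℝ))
    swap
    · exact (Set.finite_singleton 0).infinite_compl
    intro y hy
    simp only [Set.mem_compl_iff, Set.mem_singleton_iff] at hy
    have h1 : HasDerivAt (fun t : ℝ => c + t⁻¹) (-(↑y ^ 2)⁻¹) y := (hasDerivAt_inv hy).const_add c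
    have h2 : HasDerivAt (fun x : ℝ => Q.eval x) ((derivative Q).eval (c + y⁻¹)) (c + y⁻¹) :=
      Q.hasDerivAt _
    have hg : HasDerivAt (fun t : ℝ => t ^ D * Q.eval (c + t⁻¹))
        ((D : ℝ) * y ^ (D - 1) * Q.eval (c + y⁻¹)
          + y ^ D * ((derivative Q).eval (c + y⁻¹) * (-(y ^ 2)⁻¹))) y :=
      (hasDerivAt_pow D y).mul (h2.comp y h1 : HasDerivAt ((fun x : ℝ => Q.eval x) ∘ fun t : ℝ => c + t⁻¹) _ y)
    have hEE : (fun t : ℝ => P.eval t) =ᶠ[nhds y] fun t : ℝ => t ^ D * Q.eval (c + t⁻¹) := by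
      filter_upwards [isOpen_compl_singleton.mem_nhds
        (by simpa using hy : y ∈ ({0}ᶜ : Set ℝ))] with t ht
      exact hPev t (by simpa using ht)
    have hdP : (derivative P).eval y
        = (D : ℝ) * y ^ (D - 1) * Q.eval (c + y⁻¹)
          + y ^ D * ((derivative Q).eval (c + y⁻¹) * (-(y ^ 2)⁻¹)) := by
      rw [← Polynomial.deriv, hEE.deriv_eq, hg.deriv]
    have hRHS : (C (-1 : ℝ) * (X ^ (D - 1 - f) * B')).eval y
        = -(y ^ (D - 1) * R.eval (c + y⁻¹)) := by
      rw [eval_mul, eval_C, eval_mul, eval_pow, eval_X, hB'ev y hy, ← mul_assoc, ← mul_assoc,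
        mul_assoc (-1 : ℝ), ← pow_add, Nat.sub_add_cancel (by omega : f ≤ D - 1)]
      ring
    rw [Set.mem_setOf_eq, hdP, hRHS, hR]
    simp only [eval_sub, eval_mul, eval_C, eval_X, add_sub_cancel_left]
    obtain ⟨m, rfl⟩ : ∃ m, D = m + 1 := ⟨D - 1, by omega⟩
    simp only [Nat.add_sub_cancel]
    field_simp
    ring
  -- now count roots
  have c1 : P.roots.card = (D - e) + B.roots.card := by
    rw [hP, roots_mul (mul_ne_zero (pow_ne_zero _ X_ne_zero) hB0), Multiset.card_add,
      roots_pow, roots_X, Multiset.card_nsmul, Multiset.card_singleton, mul_one]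
  have c2 : (derivative P).roots.card = (D - 1 - f) + B'.roots.card := by
    rw [hkey, roots_C_mul _ (by norm_num : (-1 : ℝ) ≠ 0),
      roots_mul (mul_ne_zero (pow_ne_zero _ X_ne_zero) hB'0), Multiset.card_add,
      roots_pow, roots_X, Multiset.card_nsmul, Multiset.card_singleton, mul_one]
  have c3 := card_roots_le_derivative P
  have c4 := card_le_rev hQ0 hc
  have c5 := card_rev_le hR0 hRc
  rw [c1, c2] at c3
  rw [← hB] at c4
  rw [← hB'] at c5
  omega


def extSeq (d : ℕ) {r : ℕ} (lam : Fin r → ℝ) : Fin (r+1) → ℝ := fun j =>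
  if h : (j : ℕ) < r then lam ⟨j, h⟩
  else (-1)^d * (if h0 : 0 < r then lam ⟨0, h0⟩ else 0)

noncomputable def cnt {r : ℕ} (μ : Fin (r+1) → ℝ) : ℕ :=
  (Finset.univ.filter fun i : Fin r => μ i.castSucc * μ i.succ < 0).card

lemma cnt_lt {r : ℕ} (μ μ' tt : Fin (r+1) → ℝ) (hfac : ∀ jj, μ' jj = μ jj * tt jj)
    (j : Fin r) (hj : μ j.castSucc * μ j.succ < 0)
    (htj : tt j.castSucc * tt j.succ < 0)
    (hti : ∀ i : Fin r, i ≠ j → 0 < tt i.castSucc * tt i.succ) :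
    cnt μ' + 1 ≤ cnt μ := by
  have hpair : ∀ i : Fin r, μ' i.castSucc * μ' i.succ
      = (μ i.castSucc * μ i.succ) * (tt i.castSucc * tt i.succ) := by
    intro i; rw [hfac, hfac]; ring
  have hss : (Finset.univ.filter fun i : Fin r => μ' i.castSucc * μ' i.succ < 0)
      ⊂ (Finset.univ.filter fun i : Fin r => μ i.castSucc * μ i.succ < 0) := by
    constructor
    · intro i hi
      rw [Finset.mem_filter] at hi ⊢
      refine ⟨Finset.mem_univ _, ?_⟩
      rcases eq_or_ne i j with rfl | hij
      · exfalso
        rw [hpair] at hi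
        nlinarith [hi.2, mul_pos_of_neg_of_neg hj htj]
      · have hp := hti i hij
        have := hi.2
        rw [hpair] at this
        nlinarith
    · intro hsub
      have hjmem : j ∈ Finset.univ.filter fun i : Fin r => μ i.castSucc * μ i.succ < 0 :=
        Finset.mem_filter.2 ⟨Finset.mem_univ _, hj⟩
      have := hsub hjmem
      rw [Finset.mem_filter, hpair] at this
      nlinarith [this.2, mul_pos_of_neg_of_neg hj htj]
  have := Finset.card_lt_card hss
  unfold cnt
  omega

lemma coeffR (Q : ℝ[X]) (c : ℝ) (D : ℕ) (n : ℕ) :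
    (derivative Q * (X - C c) - C (D : ℝ) * Q).coeff n
      = n * Q.coeff n - c * ((n+1) * Q.coeff (n+1)) - D * Q.coeff n := by
  have h1 : (derivative Q * X).coeff n = n * Q.coeff n := by
    cases n with
    | zero => simp
    | succ m => rw [coeff_mul_X, coeff_derivative]; push_cast; ring
  rw [mul_sub, coeff_sub, coeff_sub, h1, coeff_mul_C, coeff_derivative, coeff_C_mul]
  push_cast; ring

lemma choose_c {Q : ℝ[X]} {D : ℕ} (hD : 1 ≤ D) (hQ0 : Q ≠ 0) (he : Q.natDegree ≤ D)
    {I : Set ℝ} (hI : I.Infinite) :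
    ∃ c ∈ I, Q.eval c ≠ 0 ∧
      (derivative Q * (X - C c) - C (D:ℝ) * Q) ≠ 0 ∧
      Q.natDegree ≤ (derivative Q * (X - C c) - C (D:ℝ) * Q).natDegree + 1 ∧
      (derivative Q * (X - C c) - C (D:ℝ) * Q).natDegree + 1 ≤ D := by
  classical
  set badc : ℝ := -(Q.coeff (D-1)) / ((D:ℝ) * Q.coeff D) with hbadc
  obtain ⟨c, hcI, hcbad⟩ := (hI.diff (Set.Finite.union Q.roots.toFinset.finite_toSet
    (Set.finite_singleton badc))).nonempty
  rw [Set.mem_union, Set.mem_singleton_iff] at hcbad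
  push_neg at hcbad
  obtain ⟨hcroots, hcbadc⟩ := hcbad
  have hQc : Q.eval c ≠ 0 := by
    intro h
    exact hcroots (by simp only [Finset.mem_coe, Multiset.mem_toFinset, mem_roots hQ0]; exact h)
  refine ⟨c, hcI, hQc, ?_⟩
  set R : ℝ[X] := derivative Q * (X - C c) - C (D:ℝ) * Q with hRdef
  have hRc : R.eval c ≠ 0 := by
    rw [hRdef]
    simp only [eval_sub, eval_mul, eval_C, eval_X, sub_self, mul_zero, zero_sub, neg_ne_zero]
    exact mul_ne_zero (by positivity) hQc
  have hR0 : R ≠ 0 := fun h => hRc (by rw [h, eval_zero])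
  have hf2 : R.natDegree + 1 ≤ D := by
    have hnd : R.natDegree ≤ D - 1 := by
      apply natDegree_le_iff_coeff_eq_zero.2
      intro m hm
      have hmD : D ≤ m := by omega
      rw [hRdef, coeffR]
      have h1 : Q.coeff (m+1) = 0 := coeff_eq_zero_of_natDegree_lt (by omega)
      rcases eq_or_lt_of_le hmD with rfl | hlt
      · rw [h1]; ring_nf
      · rw [h1, coeff_eq_zero_of_natDegree_lt (by omega)]; ring
    omega
  refine ⟨hR0, ?_, hf2⟩
  by_cases heD : Q.natDegree = D
  · have hlc : Q.coeff D ≠ 0 := by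
      rw [← heD]; exact mt leadingCoeff_eq_zero.1 hQ0
    have hco : R.coeff (D-1) ≠ 0 := by
      rw [hRdef, coeffR]
      have hD1 : (D - 1 : ℕ) + 1 = D := by omega
      rw [hD1]
      intro h
      apply hcbadc
      have hDa : (D:ℝ) * Q.coeff D ≠ 0 := mul_ne_zero (by positivity) hlc
      rw [hbadc, eq_div_iff hDa]
      rw [Nat.cast_sub hD] at h
      push_cast at h ⊢
      linarith
    have := le_natDegree_of_ne_zero hco
    omega
  · have hlt : Q.natDegree < D := lt_of_le_of_ne he heD
    have hlc : Q.coeff Q.natDegree ≠ 0 := mt leadingCoeff_eq_zero.1 hQ0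
    have hco : R.coeff Q.natDegree ≠ 0 := by
      have hz : Q.coeff (Q.natDegree + 1) = 0 := coeff_eq_zero_of_natDegree_lt (by omega)
      rw [hRdef, coeffR, hz]
      have hne : ((Q.natDegree : ℝ) - D) ≠ 0 := by
        refine sub_ne_zero.2 fun hh => heD ?_
        exact_mod_cast hh
      intro h
      simp only [mul_zero, sub_zero] at h
      exact (mul_ne_zero hne hlc) (by linear_combination h)
    have := le_natDegree_of_ne_zero hco
    omega






lemma extSeq_castSucc {d r : ℕ} (lam : Fin r → ℝ) (i : Fin r) :
    extSeq d lam i.castSucc = lam i := by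
  simp only [extSeq, Fin.coe_castSucc, i.isLt, dif_pos, Fin.eta]

lemma extSeq_last {d r : ℕ} (hr0 : 0 < r) (lam : Fin r → ℝ) :
    extSeq d lam (Fin.last r) = (-1)^d * lam ⟨0, hr0⟩ := by
  simp [extSeq, hr0]

-- transformation identity
lemma syl_trans {r : ℕ} (lam γ : Fin r → ℝ) (d : ℕ) (c : ℝ) :
    derivative (∑ k, C (lam k) * (X - C (γ k))^(d+1)) * (X - C c)
      - C ((d+1 : ℕ) : ℝ) * (∑ k, C (lam k) * (X - C (γ k))^(d+1))
    = C ((d+1 : ℕ) : ℝ) * ∑ k, C (lam k * (γ k - c)) * (X - C (γ k))^d := by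
  rw [derivative_sum, Finset.sum_mul, Finset.mul_sum, Finset.mul_sum, ← Finset.sum_sub_distrib]
  refine Finset.sum_congr rfl fun k _ => ?_
  rw [derivative_C_mul, derivative_pow, derivative_X_sub_C]
  simp only [C_mul, C_sub, C_eq_natCast]
  push_cast
  ring

lemma syl_deg {r : ℕ} (lam γ : Fin r → ℝ) (d : ℕ) :
    (∑ k, C (lam k) * (X - C (γ k))^d : ℝ[X]).natDegree ≤ d := by
  refine natDegree_sum_le_of_forall_le _ _ fun k _ => ?_
  refine (natDegree_C_mul_le _ _).trans ?_
  rw [natDegree_pow, natDegree_X_sub_C, mul_one]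

-- no sign changes ⇒ positive everywhere (up to sign)
lemma no_change {r : ℕ} (hr : 2 ≤ r) (lam γ : Fin r → ℝ) (hlam : ∀ k, lam k ≠ 0)
    (hγ : StrictMono γ) (d : ℕ) (h0 : cnt (extSeq (d+1) lam) = 0) (x : ℝ) :
    (∑ k, C (lam k) * (X - C (γ k))^(d+1) : ℝ[X]).eval x ≠ 0 := by
  have hr0 : 0 < r := by omega
  set μ := extSeq (d+1) lam with hμ
  have hμne : ∀ j, μ j ≠ 0 := by
    intro j
    by_cases h : (j : ℕ) < r
    · simp only [hμ, extSeq, h, dif_pos]; exact hlam _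
    · simp only [hμ, extSeq, h, dif_neg, not_false_iff, hr0, dif_pos]
      exact mul_ne_zero (pow_ne_zero _ (by norm_num)) (hlam _)
  have hpairs : ∀ i : Fin r, 0 < μ i.castSucc * μ i.succ := by
    intro i
    have hmem := Finset.eq_empty_iff_forall_notMem.1 (Finset.card_eq_zero.1 h0) i
    rw [Finset.mem_filter] at hmem
    push_neg at hmem
    have := hmem (Finset.mem_univ i)
    exact lt_of_le_of_ne this (Ne.symm (mul_ne_zero (hμne _) (hμne _)))
  have hall : ∀ j : Fin (r+1), 0 < μ 0 * μ j := by
    intro j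
    induction j using Fin.induction with
    | zero => exact mul_self_pos.2 (hμne 0)
    | succ i ih =>
      have h2 := hpairs i
      have h3 : (0 : ℝ) < μ i.castSucc * μ i.castSucc :=
        mul_self_pos.2 (hμne _)
      nlinarith [mul_pos ih h2]
  have hμ0 : μ 0 = lam ⟨0, hr0⟩ := by
    have : (0 : Fin (r+1)) = (⟨0, hr0⟩ : Fin r).castSucc := by ext; simp
    rw [this, hμ, extSeq_castSucc]
  have heven : Even (d+1) := by
    rcases Nat.even_or_odd (d+1) with h | h
    · exact h
    · exfalso
      have h1 := hall (Fin.last r)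
      rw [hμ0, hμ, extSeq_last hr0, h.neg_one_pow] at h1
      nlinarith [mul_self_nonneg (lam ⟨0, hr0⟩)]
  have hsame : ∀ k : Fin r, 0 < lam ⟨0, hr0⟩ * lam k := by
    intro k
    have := hall k.castSucc
    rwa [hμ0, hμ, extSeq_castSucc] at this
  intro hx
  have key : 0 < lam ⟨0, hr0⟩ * (∑ k, C (lam k) * (X - C (γ k))^(d+1) : ℝ[X]).eval x := by
    rw [eval_finset_sum, Finset.mul_sum]
    have h01 : (⟨0, hr0⟩ : Fin r) < ⟨1, hr⟩ := by simp [Fin.lt_def]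
    have hne : x ≠ γ ⟨0, hr0⟩ ∨ x ≠ γ ⟨1, hr⟩ := by
      by_contra h
      push_neg at h
      exact absurd (h.1 ▸ h.2 ▸ rfl : γ ⟨0, hr0⟩ = γ ⟨1, hr⟩) (ne_of_lt (hγ h01))
    apply Finset.sum_pos'
    · intro k _
      simp only [eval_mul, eval_C, eval_pow, eval_sub, eval_X]
      rw [← mul_assoc]
      exact mul_nonneg (le_of_lt (hsame k)) (heven.pow_nonneg _)
    · obtain ⟨k, hk⟩ : ∃ k : Fin r, x ≠ γ k := hne.elim (⟨_, ·⟩) (⟨_, ·⟩)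
      refine ⟨k, Finset.mem_univ k, ?_⟩
      simp only [eval_mul, eval_C, eval_pow, eval_sub, eval_X]
      rw [← mul_assoc]
      exact mul_pos (hsame k) (heven.pow_pos (sub_ne_zero.2 hk))
  rw [hx, mul_zero] at key
  exact lt_irrefl _ key





lemma syl_main (d : ℕ) : ∀ {r : ℕ}, 2 ≤ r → ∀ (lam γ : Fin r → ℝ), (∀ k, lam k ≠ 0) →
    StrictMono γ → ∀ Q : ℝ[X], Q = ∑ k, C (lam k) * (X - C (γ k))^d → Q ≠ 0 →
    Q.roots.card ≤ cnt (extSeq d lam) := by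
  induction d with
  | zero =>
    intro r hr lam γ hlam hγ Q hQ hQ0
    have hQC : Q = C (∑ k, lam k) := by
      rw [hQ]
      simp only [pow_zero, mul_one]
      rw [← map_sum]
    rw [hQC, roots_C]
    simp
  | succ d ih =>
    intro r hr lam γ hlam hγ Q hQ hQ0
    have hr0 : 0 < r := by omega
    by_cases hCn : cnt (extSeq (d+1) lam) = 0
    · have hz : Q.roots = 0 := by
        apply Multiset.eq_zero_of_forall_notMem
        intro x hx
        rw [mem_roots hQ0] at hx
        rw [hQ] at hx
        exact no_change hr lam γ hlam hγ d hCn x hx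
      rw [hz]
      simp
    · obtain ⟨j, hj⟩ : ∃ j : Fin r,
          extSeq (d+1) lam j.castSucc * extSeq (d+1) lam j.succ < 0 := by
        obtain ⟨j, hj⟩ := Finset.card_pos.1 (Nat.pos_of_ne_zero hCn)
        rw [Finset.mem_filter] at hj
        exact ⟨j, hj.2⟩
      -- the interval and c
      have main : ∀ c : ℝ, (∀ k, γ k ≠ c) → Q.eval c ≠ 0 →
          (derivative Q * (X - C c) - C ((d+1:ℕ):ℝ) * Q) ≠ 0 →
          Q.natDegree ≤ (derivative Q * (X - C c) - C ((d+1:ℕ):ℝ) * Q).natDegree + 1 →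
          (derivative Q * (X - C c) - C ((d+1:ℕ):ℝ) * Q).natDegree + 1 ≤ d + 1 →
          Q.roots.card ≤ cnt (extSeq d (fun k => lam k * (γ k - c))) + 1 := by
        intro c hcγ hQc hR0 hf1 hf2
        set lam' : Fin r → ℝ := fun k => lam k * (γ k - c) with hlam'def
        set Q₁ : ℝ[X] := ∑ k, C (lam' k) * (X - C (γ k))^d with hQ₁
        have htrans : derivative Q * (X - C c) - C ((d+1:ℕ):ℝ) * Q
            = C ((d+1:ℕ):ℝ) * Q₁ := by
          rw [hQ]; exact syl_trans lam γ d c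
        have hcast : ((d+1:ℕ):ℝ) ≠ 0 := by positivity
        have hQ₁0 : Q₁ ≠ 0 := by
          intro h
          apply hR0
          rw [htrans, h, mul_zero]
        have hlam'' : ∀ k, lam' k ≠ 0 :=
          fun k => mul_ne_zero (hlam k) (sub_ne_zero.2 (hcγ k))
        have hIH := ih hr lam' γ hlam'' hγ Q₁ rfl hQ₁0
        have hrolle := rolle_core (by omega) hQ0 (hQ ▸ syl_deg lam γ (d+1)) hQc rfl hR0 hf1 hf2
        rw [htrans, roots_C_mul _ hcast] at hrolle
        omega
      -- case split on position of the sign change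
      by_cases hjw : (j:ℕ)+1 < r
      · -- internal change
        have hlt : γ j < γ ⟨(j:ℕ)+1, hjw⟩ := hγ (by rw [Fin.lt_def]; exact Nat.lt_succ_self _)
        obtain ⟨c, hcI, hQc, hR0, hf1, hf2⟩ :=
          choose_c (D := d+1) (by omega) hQ0 (hQ ▸ syl_deg lam γ (d+1))
            (Set.Ioo_infinite hlt)
        obtain ⟨hc1, hc2⟩ := hcI
        have hneg : ∀ m : Fin r, (m:ℕ) ≤ (j:ℕ) → γ m - c < 0 := by
          intro m hm
          have : γ m ≤ γ j := hγ.monotone (by rw [Fin.le_def]; omega)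
          linarith
        have hpos : ∀ m : Fin r, (j:ℕ) < (m:ℕ) → 0 < γ m - c := by
          intro m hm
          have : γ ⟨(j:ℕ)+1, hjw⟩ ≤ γ m := hγ.monotone (show ((⟨(j:ℕ)+1, hjw⟩ : Fin r) : ℕ) ≤ (m:ℕ) from hm)
          linarith
        have hcγ : ∀ k, γ k ≠ c := by
          intro k
          rcases le_or_gt (k:ℕ) (j:ℕ) with h | h
          · exact ne_of_lt (by linarith [hneg k h])
          · exact ne_of_gt (by linarith [hpos k h])
        have hmain := main c hcγ hQc hR0 hf1 hf2
        set tt : Fin (r+1) → ℝ := fun jj =>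
          if h : (jj : ℕ) < r then γ ⟨jj, h⟩ - c else c - γ ⟨0, hr0⟩ with htt
        have hfac : ∀ jj, extSeq d (fun k => lam k * (γ k - c)) jj
            = extSeq (d+1) lam jj * tt jj := by
          intro jj
          by_cases h : (jj : ℕ) < r
          · simp only [extSeq, htt, dif_pos h]
          · simp only [extSeq, htt, dif_neg h, dif_pos hr0, pow_succ]
            ring
        have httc : ∀ i : Fin r, tt i.castSucc = γ i - c := by
          intro i
          simp only [htt, Fin.coe_castSucc, i.isLt, dif_pos, Fin.eta]
        have htts : ∀ i : Fin r, (h : (i:ℕ)+1 < r) → tt i.succ = γ ⟨(i:ℕ)+1, h⟩ - c := by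
          intro i h
          simp only [htt, Fin.val_succ, h, dif_pos]
        have httl : ∀ i : Fin r, ¬((i:ℕ)+1 < r) → tt i.succ = c - γ ⟨0, hr0⟩ := by
          intro i h
          simp only [htt, Fin.val_succ, h, dif_neg, not_false_iff]
        have h0c : 0 < c - γ ⟨0, hr0⟩ := by linarith [hneg ⟨0, hr0⟩ (Nat.zero_le _)]
        have hstep := cnt_lt _ _ tt hfac j hj ?_ ?_
        · exact hmain.trans hstep
        · rw [httc, htts j hjw]
          exact mul_neg_of_neg_of_pos (hneg j le_rfl) (hpos ⟨(j:ℕ)+1, hjw⟩ (show (j:ℕ) < (j:ℕ)+1 by omega))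
        · intro i hij
          have hij' : (i:ℕ) ≠ (j:ℕ) := fun h => hij (Fin.ext h)
          rcases lt_or_gt_of_ne hij' with h | h
          · have hi1 : (i:ℕ)+1 < r := by omega
            rw [httc, htts i hi1]
            exact mul_pos_of_neg_of_neg (hneg i (by omega)) (hneg ⟨(i:ℕ)+1, hi1⟩ (show (i:ℕ)+1 ≤ (j:ℕ) by omega))
          · rw [httc]
            by_cases hi1 : (i:ℕ)+1 < r
            · rw [htts i hi1]
              exact mul_pos (hpos i h) (hpos ⟨(i:ℕ)+1, hi1⟩ (show (j:ℕ) < (i:ℕ)+1 by omega))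
            · rw [httl i hi1]
              exact mul_pos (hpos i h) h0c
      · -- wrap-around change
        obtain ⟨c, hcI, hQc, hR0, hf1, hf2⟩ :=
          choose_c (D := d+1) (by omega) hQ0 (hQ ▸ syl_deg lam γ (d+1))
            (Set.Ioi_infinite (γ j))
        rw [Set.mem_Ioi] at hcI
        have hjtop : (j:ℕ) = r - 1 := by have := j.isLt; omega
        have hneg : ∀ m : Fin r, γ m - c < 0 := by
          intro m
          have : γ m ≤ γ j := hγ.monotone (by rw [Fin.le_def]; omega)
          linarith
        have hcγ : ∀ k, γ k ≠ c := fun k => ne_of_lt (by linarith [hneg k])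
        have hmain := main c hcγ hQc hR0 hf1 hf2
        set tt : Fin (r+1) → ℝ := fun jj =>
          if h : (jj : ℕ) < r then γ ⟨jj, h⟩ - c else c - γ ⟨0, hr0⟩ with htt
        have hfac : ∀ jj, extSeq d (fun k => lam k * (γ k - c)) jj
            = extSeq (d+1) lam jj * tt jj := by
          intro jj
          by_cases h : (jj : ℕ) < r
          · simp only [extSeq, htt, dif_pos h]
          · simp only [extSeq, htt, dif_neg h, dif_pos hr0, pow_succ]
            ring
        have httc : ∀ i : Fin r, tt i.castSucc = γ i - c := by
          intro i
          simp only [htt, Fin.coe_castSucc, i.isLt, dif_pos, Fin.eta]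
        have h0c : 0 < c - γ ⟨0, hr0⟩ := by linarith [hneg ⟨0, hr0⟩]
        have hstep := cnt_lt _ _ tt hfac j hj ?_ ?_
        · exact hmain.trans hstep
        · rw [httc]
          have : tt j.succ = c - γ ⟨0, hr0⟩ := by
            simp only [htt, Fin.val_succ, hjw, dif_neg, not_false_iff]
          rw [this]
          exact mul_neg_of_neg_of_pos (hneg j) h0c
        · intro i hij
          have hij' : (i:ℕ) ≠ (j:ℕ) := fun h => hij (Fin.ext h)
          have hi1 : (i:ℕ)+1 < r := by have := i.isLt; omega
          have : tt i.succ = γ ⟨(i:ℕ)+1, hi1⟩ - c := by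
            simp only [htt, Fin.val_succ, hi1, dif_pos]
          rw [httc, this]
          exact mul_pos_of_neg_of_neg (hneg i) (hneg _)


theorem stmt3 (r d : ℕ) (hr : 2 ≤ r) (lam γ : Fin r → ℝ)
    (hlam : ∀ k, lam k ≠ 0) (hγ : StrictMono γ)
    (Q : Polynomial ℝ)
    (hQ : Q = ∑ k : Fin r, Polynomial.C (lam k) * (Polynomial.X - Polynomial.C (γ k)) ^ d)
    (hQ0 : Q ≠ 0)
    (μ : Fin (r+1) → ℝ)
    (hμ : ∀ i : Fin r, μ i.castSucc = lam i)
    (hμr : μ (Fin.last r) = (-1)^d * lam ⟨0, by omega⟩) :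
    Q.roots.card ≤ Nat.card {i : Fin r // μ i.castSucc * μ i.succ < 0} := by
  have hμeq : μ = extSeq d lam := by
    funext j
    induction j using Fin.lastCases with
    | last => rw [hμr, extSeq_last (by omega : 0 < r)]
    | cast i => rw [hμ i, extSeq_castSucc]
  have hcard : Nat.card {i : Fin r // μ i.castSucc * μ i.succ < 0} = cnt μ := by
    rw [Nat.card_eq_fintype_card, Fintype.card_subtype]
    rfl
  rw [hcard, hμeq]
  exact syl_main d hr lam γ hlam hγ Q hQ hQ0
end

section
/- For binary forms: p(x,y) = Σ_{k=1}^r λ_k (α_k x + β_k y)^{2s} holds if and only if the catalecticant quadratic form satisfies H_p(t) = Σ_{k=1}^r λ_k (Σ_{i=0}^s α_k^{s-i} β_k^i t_i)^2. -/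
lemma quad_aux {n : ℕ} (M : Fin n → Fin n → ℝ) (i j : Fin n) :
    ∑ p : Fin n, ∑ q : Fin n, M p q *
      ((if p = i then (1:ℝ) else 0) + (if p = j then 1 else 0)) *
      ((if q = i then (1:ℝ) else 0) + (if q = j then 1 else 0))
    = M i i + M i j + M j i + M j j := by
  simp [mul_add, add_mul, mul_ite, Finset.sum_add_distrib, Finset.sum_ite_eq',
    Finset.mem_univ]
  ring

lemma quad_ext {n : ℕ} (M N : Fin n → Fin n → ℝ)
    (hM : ∀ i j, M i j = M j i) (hN : ∀ i j, N i j = N j i)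
    (h : ∀ t : Fin n → ℝ, ∑ i, ∑ j, M i j * t i * t j = ∑ i, ∑ j, N i j * t i * t j) :
    ∀ i j, M i j = N i j := by
  intro i j
  have h2 := h (fun p => (if p = i then (1:ℝ) else 0) + (if p = j then 1 else 0))
  rw [quad_aux M i j, quad_aux N i j] at h2
  have h1 := h (fun p => (if p = i then (1:ℝ) else 0) + (if p = i then 1 else 0))
  rw [quad_aux M i i, quad_aux N i i] at h1
  have h1' := h (fun p => (if p = j then (1:ℝ) else 0) + (if p = j then 1 else 0))
  rw [quad_aux M j j, quad_aux N j j] at h1'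
  have := hM i j; have := hN i j
  linarith

lemma sq_as_quad {n r : ℕ} (lam : Fin r → ℝ) (c : Fin r → Fin n → ℝ) (t : Fin n → ℝ) :
    ∑ k, lam k * (∑ i, c k i * t i)^2
    = ∑ i, ∑ j, (∑ k, lam k * (c k i * c k j)) * t i * t j := by
  have L : ∑ k, lam k * (∑ i, c k i * t i)^2
      = ∑ k, ∑ i, ∑ j, lam k * (c k i * c k j) * t i * t j := by
    refine Finset.sum_congr rfl fun k _ => ?_
    rw [sq, Finset.sum_mul_sum, Finset.mul_sum]
    refine Finset.sum_congr rfl fun i _ => ?_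
    rw [Finset.mul_sum]
    exact Finset.sum_congr rfl fun j _ => by ring
  rw [L, Finset.sum_comm]
  refine Finset.sum_congr rfl fun i _ => ?_
  rw [Finset.sum_comm]
  refine Finset.sum_congr rfl fun j _ => ?_
  rw [Finset.sum_mul, Finset.sum_mul]

open Polynomial in
lemma coeff_ext {r : ℕ} (n : ℕ) (a : ℕ → ℝ) (lam α β : Fin r → ℝ)
    (h : ∀ x : ℝ, ∑ j ∈ Finset.range (n+1), (Nat.choose n j : ℝ) * a j * x^(n-j)
        = ∑ k : Fin r, lam k * (α k * x + β k)^n) :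
    ∀ m ≤ n, a m = ∑ k : Fin r, lam k * (α k ^ (n-m) * β k ^ m) := by
  intro m hm
  set P : ℝ[X] := ∑ j ∈ Finset.range (n+1), C ((Nat.choose n j : ℝ) * a j) * X^(n-j) with hP
  set Q : ℝ[X] := ∑ k : Fin r, C (lam k) * (C (α k) * X + C (β k))^n with hQ
  have hPQ : P = Q := by
    apply Polynomial.funext
    intro x
    have := h x
    simp only [hP, hQ, eval_finset_sum, eval_mul, eval_pow, eval_add, eval_C, eval_X]
    exact this
  have hcoeff := congrArg (fun p => Polynomial.coeff p (n - m)) hPQ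
  simp only [hP, hQ, finset_sum_coeff, coeff_C_mul, coeff_X_pow] at hcoeff
  have hL : ∑ j ∈ Finset.range (n+1), (Nat.choose n j : ℝ) * a j * (if n - m = n - j then 1 else 0)
      = (Nat.choose n m : ℝ) * a m := by
    rw [Finset.sum_eq_single m]
    · simp
    · intro j hj hjm
      have hj' : j ≤ n := Nat.lt_succ_iff.mp (Finset.mem_range.mp hj)
      have : ¬ (n - m = n - j) := by omega
      simp [this]
    · intro hmem; exact absurd (Finset.mem_range.mpr (Nat.lt_succ_of_le hm)) hmem
  have hR : ∀ k : Fin r, ((C (α k) * X + C (β k))^n).coeff (n - m)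
      = (Nat.choose n m : ℝ) * (α k ^ (n-m) * β k ^ m) := by
    intro k
    have key : ∀ j : ℕ, (C (α k) * X)^j * C (β k)^(n-j) * (n.choose j : ℝ[X])
        = C (α k ^ j * β k ^ (n-j) * (n.choose j : ℝ)) * X ^ j := by
      intro j
      rw [mul_pow, ← C_pow, ← C_pow, ← C_eq_natCast, C_mul, C_mul]
      ring
    rw [add_pow, finset_sum_coeff]
    simp only [key, coeff_C_mul, coeff_X_pow]
    rw [Finset.sum_eq_single (n - m)]
    · have h1 : n - (n - m) = m := by omega
      have h2 : n.choose (n - m) = n.choose m := Nat.choose_symm hm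
      simp [h1, h2]; ring
    · intro j hj hjm
      simp [Ne.symm hjm]
    · intro hmem
      exact absurd (Finset.mem_range.mpr (by omega)) hmem
  rw [hL] at hcoeff
  simp only [hR] at hcoeff
  have hpos : (0:ℝ) < (Nat.choose n m : ℝ) := by
    exact_mod_cast Nat.choose_pos hm
  have : (Nat.choose n m : ℝ) * a m
      = (Nat.choose n m : ℝ) * ∑ k : Fin r, lam k * (α k ^ (n-m) * β k ^ m) := by
    rw [hcoeff, Finset.mul_sum]
    exact Finset.sum_congr rfl fun k _ => by ring
  exact mul_left_cancel₀ (ne_of_gt hpos) this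

-- K implies the binary form representation
lemma K_to_form {s r : ℕ} (a : ℕ → ℝ) (lam α β : Fin r → ℝ)
    (hK : ∀ m ≤ 2*s, a m = ∑ k : Fin r, lam k * (α k ^ (2*s-m) * β k ^ m)) :
    ∀ x y : ℝ,
      ∑ j ∈ Finset.range (2*s+1), (Nat.choose (2*s) j : ℝ) * a j * x^(2*s-j) * y^j
        = ∑ k : Fin r, lam k * (α k * x + β k * y)^(2*s) := by
  intro x y
  have step1 : ∑ j ∈ Finset.range (2*s+1), (Nat.choose (2*s) j : ℝ) * a j * x^(2*s-j) * y^j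
      = ∑ j ∈ Finset.range (2*s+1), ∑ k : Fin r,
          lam k * ((β k * y)^j * (α k * x)^(2*s-j) * (Nat.choose (2*s) j : ℝ)) := by
    refine Finset.sum_congr rfl fun j hj => ?_
    rw [hK j (Nat.lt_succ_iff.mp (Finset.mem_range.mp hj)), Finset.mul_sum,
      Finset.sum_mul, Finset.sum_mul]
    refine Finset.sum_congr rfl fun k _ => ?_
    rw [mul_pow, mul_pow]
    ring
  rw [step1, Finset.sum_comm]
  refine Finset.sum_congr rfl fun k _ => ?_
  rw [← Finset.mul_sum, ← add_pow, add_comm (β k * y)]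

-- K implies the catalecticant representation
lemma K_to_quad {s r : ℕ} (a : ℕ → ℝ) (lam α β : Fin r → ℝ)
    (hK : ∀ m ≤ 2*s, a m = ∑ k : Fin r, lam k * (α k ^ (2*s-m) * β k ^ m)) :
    ∀ i j : Fin (s+1), a ((i:ℕ)+(j:ℕ))
      = ∑ k : Fin r, lam k * ((α k ^ (s-(i:ℕ)) * β k ^ (i:ℕ)) * (α k ^ (s-(j:ℕ)) * β k ^ (j:ℕ))) := by
  intro i j
  have hi : (i:ℕ) ≤ s := Nat.lt_succ_iff.mp i.isLt
  have hj : (j:ℕ) ≤ s := Nat.lt_succ_iff.mp j.isLt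
  rw [hK ((i:ℕ)+(j:ℕ)) (by omega)]
  refine Finset.sum_congr rfl fun k _ => ?_
  have h1 : 2*s - ((i:ℕ)+(j:ℕ)) = (s-(i:ℕ)) + (s-(j:ℕ)) := by omega
  rw [h1, pow_add, pow_add]
  ring

theorem stmt6 (s r : ℕ) (a : ℕ → ℝ) (lam α β : Fin r → ℝ) :
    (∀ x y : ℝ,
      ∑ j ∈ Finset.range (2*s+1), (Nat.choose (2*s) j : ℝ) * a j * x^(2*s-j) * y^j
        = ∑ k : Fin r, lam k * (α k * x + β k * y)^(2*s))
    ↔ (∀ t : Fin (s+1) → ℝ,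
      ∑ i : Fin (s+1), ∑ j : Fin (s+1), a ((i:ℕ)+(j:ℕ)) * t i * t j
        = ∑ k : Fin r, lam k * (∑ i : Fin (s+1), α k ^ (s-(i:ℕ)) * β k ^ (i:ℕ) * t i)^2) := by
  constructor
  · intro h t
    have hK : ∀ m ≤ 2*s, a m = ∑ k : Fin r, lam k * (α k ^ (2*s-m) * β k ^ m) := by
      apply coeff_ext (2*s) a lam α β
      intro x
      have := h x 1
      simpa using this
    rw [sq_as_quad lam (fun k i => α k ^ (s-(i:ℕ)) * β k ^ (i:ℕ)) t]
    exact Finset.sum_congr rfl fun i _ => Finset.sum_congr rfl fun j _ => by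
      rw [K_to_quad a lam α β hK i j]
  · intro h
    apply K_to_form
    -- extract matrix equality from quadratic form equality
    have h' : ∀ t : Fin (s+1) → ℝ,
        ∑ i : Fin (s+1), ∑ j : Fin (s+1), a ((i:ℕ)+(j:ℕ)) * t i * t j
        = ∑ i : Fin (s+1), ∑ j : Fin (s+1),
            (∑ k : Fin r, lam k * ((α k ^ (s-(i:ℕ)) * β k ^ (i:ℕ)) * (α k ^ (s-(j:ℕ)) * β k ^ (j:ℕ)))) * t i * t j := by
      intro t
      rw [h t, sq_as_quad lam (fun k i => α k ^ (s-(i:ℕ)) * β k ^ (i:ℕ)) t]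
    have hMN := quad_ext (fun i j => a ((i:ℕ)+(j:ℕ)))
      (fun i j => ∑ k : Fin r, lam k * ((α k ^ (s-(i:ℕ)) * β k ^ (i:ℕ)) * (α k ^ (s-(j:ℕ)) * β k ^ (j:ℕ))))
      (fun i j => congrArg a (Nat.add_comm _ _))
      (fun i j => Finset.sum_congr rfl fun k _ => by ring)
      h'
    intro m hm
    set i : ℕ := min m s with hi
    set j : ℕ := m - i with hj
    have his : i ≤ s := min_le_right m s
    have hjs : j ≤ s := by omega
    have hij : i + j = m := by omega
    have := hMN ⟨i, by omega⟩ ⟨j, by omega⟩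
    simp only [Fin.val_mk] at this
    rw [hij] at this
    rw [this]
    refine Finset.sum_congr rfl fun k _ => ?_
    have h1 : 2*s - m = (s-i) + (s-j) := by omega
    have h2 : m = i + j := hij.symm
    rw [h1, h2, pow_add, pow_add]
    ring
end

section
/- If p ∈ F_{2,2s}, q(x,y) = p(αx + βy, γx + δy) with αδ - βγ ≠ 0, then the catalecticant quadratic forms H_p and H_q have the same signature (equal numbers of positive and negative eigenvalues). -/
open Polynomial Finset Matrix

lemma termco (u v w : ℝ) (m i : ℕ) :
    (C u * (C v * X ^ m) * C w).coeff i = if i = m then u * v * w else 0 := by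
  have : C u * (C v * X ^ m) * C w = C (u * v * w) * X ^ m := by
    simp only [C_mul]; ring
  rw [this, coeff_C_mul, coeff_X_pow]
  split <;> simp

lemma coeffCC (x y : ℝ) (n i : ℕ) (h : i ≤ n) :
    ((C x + C y * X)^n).coeff i = n.choose i * x^(n-i) * y^i := by
  rw [add_pow, finset_sum_coeff, Finset.sum_eq_single (n - i)]
  · rw [mul_pow, ← C_pow, ← C_pow, ← C_eq_natCast, termco, if_pos (by omega),
      Nat.sub_sub_self h, Nat.choose_symm h]
    ring
  · intro k hk hki
    rw [mul_pow, ← C_pow, ← C_pow, ← C_eq_natCast, termco, if_neg (by simp at hk; omega)]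
  · intro h2; simp at h2

lemma coeffCC_zero (x y : ℝ) (n i : ℕ) (h : n < i) :
    ((C x + C y * X)^n).coeff i = 0 := by
  apply coeff_eq_zero_of_natDegree_lt
  calc ((C x + C y * X)^n).natDegree ≤ n * (C x + C y * X).natDegree := natDegree_pow_le
  _ ≤ n * 1 := by
      gcongr
      exact natDegree_add_le_of_degree_le (by simp) ((natDegree_C_mul_le _ _).trans (by simp))
  _ < i := by omega

lemma expandCC (α β γ δ x y : ℝ) (s : ℕ) :
    (C (α*x+β*y) + C (γ*x+δ*y) * X)^s
    = ∑ k ∈ range (s+1), C ((s.choose k : ℝ) * x^(s-k) * y^k)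
        * ((C α + C γ*X)^(s-k) * (C β + C δ*X)^k) := by
  have h : C (α*x+β*y) + C (γ*x+δ*y) * X
      = C y * (C β + C δ*X) + C x * (C α + C γ*X) := by
    simp only [C_add, C_mul]; ring
  rw [h, add_pow]
  apply Finset.sum_congr rfl
  intro k hk
  simp only [mul_pow, ← C_pow, ← C_eq_natCast, C_mul]
  ring

lemma prodexpand (α β γ δ x y x' y' : ℝ) (s : ℕ) :
    (C (α*x+β*y) + C (γ*x+δ*y) * X)^s * (C (α*x'+β*y') + C (γ*x'+δ*y') * X)^s
    = ∑ k ∈ range (s+1), ∑ l ∈ range (s+1),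
        C ((s.choose k : ℝ) * x^(s-k) * y^k * ((s.choose l : ℝ) * x'^(s-l) * y'^l))
          * ((C α + C γ*X)^(2*s-(k+l)) * (C β + C δ*X)^(k+l)) := by
  rw [expandCC α β γ δ x y, expandCC α β γ δ x' y', Finset.sum_mul_sum]
  apply Finset.sum_congr rfl
  intro k hk
  apply Finset.sum_congr rfl
  intro l hl
  simp only [Finset.mem_range] at hk hl
  have e1 : 2*s-(k+l) = (s-k)+(s-l) := by omega
  have e2 : k+l = k+l := rfl
  rw [e1, pow_add, pow_add]
  simp only [C_mul]
  ring

lemma transform (α β γ δ : ℝ) (a : ℕ → ℝ) (s : ℕ) (x y x' y' : ℝ) :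
    ∑ m ∈ range (2*s+1), a m *
      ((C (α*x+β*y) + C (γ*x+δ*y) * X)^s * (C (α*x'+β*y') + C (γ*x'+δ*y') * X)^s).coeff m
    = ∑ k ∈ range (s+1), ∑ l ∈ range (s+1),
        ((s.choose k : ℝ) * x^(s-k) * y^k) * ((s.choose l : ℝ) * x'^(s-l) * y'^l)
        * (∑ m ∈ range (2*s+1), a m *
            ((C α + C γ*X)^(2*s-(k+l)) * (C β + C δ*X)^(k+l)).coeff m) := by
  rw [prodexpand]
  simp only [finset_sum_coeff, coeff_C_mul, Finset.mul_sum]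
  rw [Finset.sum_comm]
  apply Finset.sum_congr rfl
  intro k hk
  rw [Finset.sum_comm]
  apply Finset.sum_congr rfl
  intro l hl
  apply Finset.sum_congr rfl
  intro m hm
  ring

lemma extract (s : ℕ) (c d : ℕ → ℝ)
    (h : ∀ t : ℝ, ∑ k ∈ range (s+1), ∑ l ∈ range (s+1),
            (s.choose k:ℝ)*(s.choose l:ℝ)*c (k+l)*t^(k+l)
        = ∑ k ∈ range (s+1), ∑ l ∈ range (s+1),
            (s.choose k:ℝ)*(s.choose l:ℝ)*d (k+l)*t^(k+l)) :
    ∀ m, m ≤ 2*s → c m = d m := by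
  have hPQ : (∑ k ∈ range (s+1), ∑ l ∈ range (s+1),
        C ((s.choose k:ℝ)*(s.choose l:ℝ)*c (k+l)) * X^(k+l))
      = ∑ k ∈ range (s+1), ∑ l ∈ range (s+1),
        C ((s.choose k:ℝ)*(s.choose l:ℝ)*d (k+l)) * X^(k+l) := by
    apply Polynomial.funext
    intro t
    simp only [eval_finset_sum, eval_mul, eval_pow, eval_C, eval_X]
    exact h t
  intro m hm
  have hco := congrArg (fun P => Polynomial.coeff P m) hPQ
  simp only [finset_sum_coeff, coeff_C_mul, coeff_X_pow, mul_ite, mul_one, mul_zero] at hco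
  have key : ∀ e : ℕ → ℝ,
      (∑ k ∈ range (s+1), ∑ l ∈ range (s+1),
        if m = k + l then (s.choose k:ℝ)*(s.choose l:ℝ)*e (k+l) else 0)
      = e m * ∑ k ∈ range (s+1), ∑ l ∈ range (s+1),
          (if m = k + l then (s.choose k:ℝ)*(s.choose l:ℝ) else 0) := by
    intro e
    simp only [Finset.mul_sum]
    apply Finset.sum_congr rfl; intro k _
    apply Finset.sum_congr rfl; intro l _
    split
    · next hkl => rw [hkl]; ring
    · ring
  rw [key c, key d] at hco
  have hV : 0 < ∑ k ∈ range (s+1), ∑ l ∈ range (s+1),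
      (if m = k + l then (s.choose k:ℝ)*(s.choose l:ℝ) else 0) := by
    have hterm : ∀ k l : ℕ, (0:ℝ) ≤ if m = k + l then (s.choose k:ℝ)*(s.choose l:ℝ) else 0 := by
      intro k l; split <;> positivity
    set k₀ := min m s with hk0
    have hk₀ : k₀ ∈ range (s+1) := Finset.mem_range.2 (by omega)
    have hl₀ : m - k₀ ∈ range (s+1) := Finset.mem_range.2 (by omega)
    have hin : 0 < ∑ l ∈ range (s+1), (if m = k₀ + l then (s.choose k₀:ℝ)*(s.choose l:ℝ) else 0) := by
      apply Finset.sum_pos' (fun l _ => hterm k₀ l)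
      refine ⟨m - k₀, hl₀, ?_⟩
      rw [if_pos (by omega)]
      have h1 : 0 < s.choose k₀ := Nat.choose_pos (by omega)
      have h2 : 0 < s.choose (m - k₀) := Nat.choose_pos (by omega)
      positivity
    calc (0:ℝ) < _ := hin
    _ ≤ _ := Finset.single_le_sum
        (f := fun k => ∑ l ∈ range (s+1), (if m = k + l then (s.choose k:ℝ)*(s.choose l:ℝ) else 0))
        (fun k _ => Finset.sum_nonneg (fun l _ => hterm k l)) hk₀
  exact mul_right_cancel₀ (ne_of_gt hV) hco

lemma regroup (M : ℕ) (f : ℕ → ℕ → ℝ) (hf : ∀ i j, M ≤ i + j → f i j = 0) :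
    ∑ m ∈ range M, ∑ ij ∈ Finset.HasAntidiagonal.antidiagonal m, f ij.1 ij.2
      = ∑ i ∈ range M, ∑ j ∈ range M, f i j := by
  rw [← Finset.sum_product']
  have hdisj : (↑(range M) : Set ℕ).PairwiseDisjoint Finset.HasAntidiagonal.antidiagonal := by
    intro m _ m' _ hne
    simp only [Function.onFun, Finset.disjoint_left]
    intro p hp hp'
    simp only [Finset.HasAntidiagonal.mem_antidiagonal] at hp hp'
    exact hne (hp ▸ hp')
  rw [← Finset.sum_biUnion hdisj]
  apply Finset.sum_subset
  · intro p hp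
    simp only [Finset.mem_biUnion, Finset.mem_range, Finset.HasAntidiagonal.mem_antidiagonal] at hp
    obtain ⟨m, hm, hpm⟩ := hp
    simp only [Finset.mem_product, Finset.mem_range]
    omega
  · intro p hp hnp
    apply hf
    by_contra hlt
    push_neg at hlt
    exact hnp (Finset.mem_biUnion.2 ⟨p.1 + p.2, Finset.mem_range.2 hlt,
      Finset.HasAntidiagonal.mem_antidiagonal.2 rfl⟩)

lemma coeffsum_eq_double (s : ℕ) (c : ℕ → ℝ) (x y x' y' : ℝ) :
    ∑ m ∈ range (2*s+1), c m * ((C x + C y*X)^s * (C x' + C y'*X)^s).coeff m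
    = ∑ i ∈ range (s+1), ∑ j ∈ range (s+1),
        c (i+j) * ((s.choose i:ℝ) * x^(s-i) * y^i) * ((s.choose j:ℝ) * x'^(s-j) * y'^j) := by
  have step1 : ∑ m ∈ range (2*s+1), c m * ((C x + C y*X)^s * (C x' + C y'*X)^s).coeff m
      = ∑ m ∈ range (2*s+1), ∑ ij ∈ Finset.HasAntidiagonal.antidiagonal m,
          c (ij.1 + ij.2) * ((C x + C y*X)^s).coeff ij.1 * ((C x' + C y'*X)^s).coeff ij.2 := by
    apply Finset.sum_congr rfl
    intro m _
    rw [coeff_mul, Finset.mul_sum]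
    apply Finset.sum_congr rfl
    intro ij hij
    rw [Finset.HasAntidiagonal.mem_antidiagonal] at hij
    rw [hij]; ring
  have hr := regroup (2*s+1)
    (fun i j => c (i+j) * ((C x + C y*X)^s).coeff i * ((C x' + C y'*X)^s).coeff j)
    (by
      intro i j hij
      beta_reduce
      have : s < i ∨ s < j := by omega
      rcases this with h | h
      · rw [coeffCC_zero _ _ _ _ h]; ring
      · rw [coeffCC_zero _ _ _ _ h]; ring)
  beta_reduce at hr
  rw [step1, hr]
  have shrink : ∀ (g : ℕ → ℕ → ℝ), (∀ i j, i ∈ range (2*s+1) → j ∈ range (2*s+1) →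
      (s < i ∨ s < j) → g i j = 0) →
      ∑ i ∈ range (2*s+1), ∑ j ∈ range (2*s+1), g i j
        = ∑ i ∈ range (s+1), ∑ j ∈ range (s+1), g i j := by
    intro g hg
    rw [← Finset.sum_subset (Finset.range_subset_range.2 (by omega : s+1 ≤ 2*s+1))
      (fun i hi hni => ?_)]
    · apply Finset.sum_congr rfl
      intro i hi
      rw [← Finset.sum_subset (Finset.range_subset_range.2 (by omega : s+1 ≤ 2*s+1))
        (fun j hj hnj => ?_)]
      apply hg _ _ ((Finset.range_subset_range.2 (by omega : s+1 ≤ 2*s+1)) hi) hj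
      right; simp at hnj; omega
    · apply Finset.sum_eq_zero
      intro j hj
      apply hg _ _ hi hj
      left; simp at hni; omega
  rw [shrink]
  · apply Finset.sum_congr rfl; intro i hi
    apply Finset.sum_congr rfl; intro j hj
    simp only [Finset.mem_range] at hi hj
    rw [coeffCC _ _ _ _ (by omega), coeffCC _ _ _ _ (by omega)]
  · intro i j _ _ hij
    rcases hij with h | h
    · rw [coeffCC_zero _ _ _ _ h]; ring
    · rw [coeffCC_zero _ _ _ _ h]; ring

lemma dotform (s : ℕ) (c : ℕ → ℝ) (Cm : Matrix (Fin (s+1)) (Fin (s+1)) ℝ)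
    (hC : Cm = Matrix.of fun i j : Fin (s+1) => c ((i:ℕ)+(j:ℕ))) (x y x' y' : ℝ) :
    (fun i : Fin (s+1) => ((s.choose (i:ℕ)):ℝ) * x^(s-(i:ℕ)) * y^(i:ℕ)) ⬝ᵥ
      (Cm.mulVec (fun j : Fin (s+1) => ((s.choose (j:ℕ)):ℝ) * x'^(s-(j:ℕ)) * y'^(j:ℕ)))
    = ∑ i ∈ range (s+1), ∑ j ∈ range (s+1),
        c (i+j) * (((s.choose i):ℝ) * x^(s-i) * y^i) * (((s.choose j):ℝ) * x'^(s-j) * y'^j) := by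
  subst hC
  conv_rhs => rw [← Fin.sum_univ_eq_sum_range]
  simp only [dotProduct, Matrix.mulVec, Matrix.of_apply, Finset.mul_sum]
  apply Finset.sum_congr rfl
  intro i _
  conv_rhs => rw [← Fin.sum_univ_eq_sum_range]
  apply Finset.sum_congr rfl
  intro j _
  ring

lemma span1 (s : ℕ) (w : Fin (s+1) → ℝ)
    (h : ∀ t : ℝ, ∑ k : Fin (s+1), w k * (((s.choose (k:ℕ)):ℝ) * (1:ℝ)^(s-(k:ℕ)) * t^(k:ℕ)) = 0) :
    w = 0 := by
  have hP : (∑ k : Fin (s+1), C (w k * ((s.choose (k:ℕ)):ℝ)) * X^(k:ℕ)) = (0 : ℝ[X]) := by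
    apply Polynomial.funext
    intro t
    simp only [eval_finset_sum, eval_mul, eval_pow, eval_C, eval_X, eval_zero]
    have ht := h t
    simp only [one_pow] at ht
    rw [← ht]
    apply Finset.sum_congr rfl
    intro k _
    ring
  funext j
  have hco := congrArg (fun P => Polynomial.coeff P (j:ℕ)) hP
  simp only [finset_sum_coeff, coeff_C_mul, coeff_X_pow, coeff_zero, mul_ite, mul_one,
    mul_zero, Fin.val_eq_val, Finset.sum_ite_eq' Finset.univ j, Finset.mem_univ,
    if_true] at hco
  have hch : (0:ℝ) < (s.choose (j:ℕ) : ℝ) := by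
    exact_mod_cast Nat.choose_pos (by exact j.is_le)
  have := mul_right_cancel₀ (ne_of_gt hch) (by simpa using hco : w j * ((s.choose (j:ℕ)):ℝ) = 0 * ((s.choose (j:ℕ)):ℝ))
  simpa using this
lemma mulVec_van (s : ℕ) (Cm : Matrix (Fin (s+1)) (Fin (s+1)) ℝ)
    (h : ∀ x y : ℝ, Cm.mulVec
      (fun k : Fin (s+1) => ((s.choose (k:ℕ)):ℝ) * x^(s-(k:ℕ)) * y^(k:ℕ)) = 0) :
    Cm = 0 := by
  ext i k
  have hrow : (fun k : Fin (s+1) => Cm i k) = 0 := by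
    apply span1 s
    intro t
    have := congrFun (h 1 t) i
    simpa [Matrix.mulVec, dotProduct] using this
  exact congrFun hrow k

lemma bilin_van (s : ℕ) (Cm : Matrix (Fin (s+1)) (Fin (s+1)) ℝ)
    (h : ∀ x y x' y' : ℝ,
      (fun i : Fin (s+1) => ((s.choose (i:ℕ)):ℝ) * x^(s-(i:ℕ)) * y^(i:ℕ)) ⬝ᵥ
        Cm.mulVec (fun k : Fin (s+1) => ((s.choose (k:ℕ)):ℝ) * x'^(s-(k:ℕ)) * y'^(k:ℕ)) = 0) :
    Cm = 0 := by
  apply mulVec_van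
  intro x y
  apply span1 s
  intro t
  have := h 1 t x y
  simp only [dotProduct] at this
  rw [← this]
  apply Finset.sum_congr rfl
  intro k _
  ring
lemma vvL (s : ℕ) (α β γ δ x y : ℝ) :
    (fun i : Fin (s+1) => ((s.choose (i:ℕ)):ℝ) * (α*x+β*y)^(s-(i:ℕ)) * (γ*x+δ*y)^(i:ℕ))
    = (Matrix.of fun i k : Fin (s+1) =>
        ((C α + C γ*X)^(s-(k:ℕ)) * (C β + C δ*X)^(k:ℕ)).coeff (i:ℕ)).mulVec
        (fun k : Fin (s+1) => ((s.choose (k:ℕ)):ℝ) * x^(s-(k:ℕ)) * y^(k:ℕ)) := by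
  funext i
  have h1 : ((s.choose (i:ℕ)):ℝ) * (α*x+β*y)^(s-(i:ℕ)) * (γ*x+δ*y)^(i:ℕ)
      = ((C (α*x+β*y) + C (γ*x+δ*y) * X)^s).coeff (i:ℕ) :=
    (coeffCC _ _ _ _ i.is_le).symm
  rw [h1, expandCC, finset_sum_coeff]
  simp only [coeff_C_mul]
  rw [← Fin.sum_univ_eq_sum_range]
  simp only [Matrix.mulVec, dotProduct, Matrix.of_apply]
  apply Finset.sum_congr rfl
  intro k _
  ring


theorem congruence (s : ℕ) (a b : ℕ → ℝ) (α β γ δ : ℝ) (hdet : α*δ - β*γ ≠ 0)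
    (hq : ∀ x y : ℝ,
      ∑ j ∈ Finset.range (2*s+1), (Nat.choose (2*s) j : ℝ) * b j * x^(2*s-j) * y^j
      = ∑ j ∈ Finset.range (2*s+1),
          (Nat.choose (2*s) j : ℝ) * a j * (α*x+β*y)^(2*s-j) * (γ*x+δ*y)^j)
    (A B : Matrix (Fin (s+1)) (Fin (s+1)) ℝ)
    (hA : A = Matrix.of fun i j : Fin (s+1) => a ((i:ℕ)+(j:ℕ)))
    (hB : B = Matrix.of fun i j : Fin (s+1) => b ((i:ℕ)+(j:ℕ))) :
    ∃ M M' : Matrix (Fin (s+1)) (Fin (s+1)) ℝ,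
      M' * M = 1 ∧ M * M' = 1 ∧ B = Mᵀ * A * M := by
  -- the transformed coefficients
  set cc : ℕ → ℝ := fun j => ∑ m ∈ range (2*s+1), a m *
      ((C α + C γ*X)^(2*s-j) * (C β + C δ*X)^j).coeff m with hcc
  -- squares of degree-s binomials
  have sq : ∀ w z : ℝ, ∀ m, m ≤ 2*s →
      ((C w + C z*X)^s * (C w + C z*X)^s).coeff m
        = ((2*s).choose m : ℝ) * w^(2*s-m) * z^m := by
    intro w z m hm
    rw [← pow_add]
    have : s + s = 2*s := by ring
    rw [this, coeffCC _ _ _ _ hm]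
  -- diagonal evaluation of the a-side
  have hdiagA : ∀ x y : ℝ,
      ∑ m ∈ range (2*s+1), a m *
        ((C (α*x+β*y) + C (γ*x+δ*y) * X)^s * (C (α*x+β*y) + C (γ*x+δ*y) * X)^s).coeff m
      = ∑ m ∈ range (2*s+1), ((2*s).choose m : ℝ) * b m * x^(2*s-m) * y^m := by
    intro x y
    rw [hq x y]
    apply Finset.sum_congr rfl
    intro m hm
    rw [sq _ _ m (by simp at hm; omega)]
    ring
  -- diagonal evaluation of the b-side
  have hdiagB : ∀ x y : ℝ,
      ∑ m ∈ range (2*s+1), b m * ((C x + C y*X)^s * (C x + C y*X)^s).coeff m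
      = ∑ m ∈ range (2*s+1), ((2*s).choose m : ℝ) * b m * x^(2*s-m) * y^m := by
    intro x y
    apply Finset.sum_congr rfl
    intro m hm
    rw [sq _ _ m (by simp at hm; omega)]
    ring
  -- cc agrees with b up to degree 2s
  have hcb : ∀ m, m ≤ 2*s → cc m = b m := by
    apply extract
    intro t
    have h1 := transform α β γ δ a s 1 t 1 t
    have h2 := coeffsum_eq_double s b 1 t 1 t
    have h3 := (hdiagA 1 t).symm.trans (h1)
    have h4 := (hdiagB 1 t).symm.trans (h2)
    rw [← h3, ← h4] at *
    -- now goal: sums with cc = sums with b, both in extract's shape; massage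
    calc ∑ k ∈ range (s+1), ∑ l ∈ range (s+1),
            (s.choose k:ℝ)*(s.choose l:ℝ)*cc (k+l)*t^(k+l)
        = ∑ k ∈ range (s+1), ∑ l ∈ range (s+1),
            ((s.choose k : ℝ) * 1^(s-k) * t^k) * ((s.choose l : ℝ) * 1^(s-l) * t^l) * cc (k+l) := by
          apply Finset.sum_congr rfl; intro k _
          apply Finset.sum_congr rfl; intro l _
          rw [pow_add]; ring
      _ = ∑ m ∈ range (2*s+1), ((2*s).choose m : ℝ) * b m * 1^(2*s-m) * t^m := by
          rw [← hdiagA 1 t, h1]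
      _ = ∑ k ∈ range (s+1), ∑ l ∈ range (s+1),
            b (k+l) * ((s.choose k:ℝ) * 1^(s-k) * t^k) * ((s.choose l:ℝ) * 1^(s-l) * t^l) := by
          rw [← hdiagB 1 t, h2]
      _ = ∑ k ∈ range (s+1), ∑ l ∈ range (s+1),
            (s.choose k:ℝ)*(s.choose l:ℝ)*b (k+l)*t^(k+l) := by
          apply Finset.sum_congr rfl; intro k _
          apply Finset.sum_congr rfl; intro l _
          rw [pow_add]; ring
  -- key bilinear identity
  have key : ∀ x y x' y' : ℝ,
      (fun i : Fin (s+1) => ((s.choose (i:ℕ)):ℝ) * x^(s-(i:ℕ)) * y^(i:ℕ)) ⬝ᵥ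
        B.mulVec (fun j : Fin (s+1) => ((s.choose (j:ℕ)):ℝ) * x'^(s-(j:ℕ)) * y'^(j:ℕ))
      = (fun i : Fin (s+1) =>
          ((s.choose (i:ℕ)):ℝ) * (α*x+β*y)^(s-(i:ℕ)) * (γ*x+δ*y)^(i:ℕ)) ⬝ᵥ
        A.mulVec (fun j : Fin (s+1) =>
          ((s.choose (j:ℕ)):ℝ) * (α*x'+β*y')^(s-(j:ℕ)) * (γ*x'+δ*y')^(j:ℕ)) := by
    intro x y x' y'
    rw [dotform s b B hB, dotform s a A hA]
    rw [← coeffsum_eq_double s b x y x' y', ← coeffsum_eq_double s a (α*x+β*y) (γ*x+δ*y) (α*x'+β*y') (γ*x'+δ*y')]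
    rw [transform α β γ δ a s x y x' y']
    rw [coeffsum_eq_double s b x y x' y']
    apply Finset.sum_congr rfl; intro k hk
    apply Finset.sum_congr rfl; intro l hl
    simp only [Finset.mem_range] at hk hl
    have hb : (∑ m ∈ range (2*s+1), a m *
        ((C α + C γ*X)^(2*s-(k+l)) * (C β + C δ*X)^(k+l)).coeff m) = b (k+l) :=
      hcb (k+l) (by omega)
    rw [hb]
    ring
  -- define the congruence matrices
  set M : Matrix (Fin (s+1)) (Fin (s+1)) ℝ := Matrix.of fun i k : Fin (s+1) =>
      ((C α + C γ*X)^(s-(k:ℕ)) * (C β + C δ*X)^(k:ℕ)).coeff (i:ℕ) with hM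
  set D : ℝ := α*δ - β*γ with hD
  set M' : Matrix (Fin (s+1)) (Fin (s+1)) ℝ := Matrix.of fun i k : Fin (s+1) =>
      ((C (δ/D) + C (-γ/D)*X)^(s-(k:ℕ)) * (C (-β/D) + C (α/D)*X)^(k:ℕ)).coeff (i:ℕ) with hM'
  have hMv : ∀ x y : ℝ,
      (fun i : Fin (s+1) => ((s.choose (i:ℕ)):ℝ) * (α*x+β*y)^(s-(i:ℕ)) * (γ*x+δ*y)^(i:ℕ))
      = M.mulVec (fun k : Fin (s+1) => ((s.choose (k:ℕ)):ℝ) * x^(s-(k:ℕ)) * y^(k:ℕ)) :=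
    fun x y => vvL s α β γ δ x y
  have hM'v : ∀ x y : ℝ,
      (fun i : Fin (s+1) => ((s.choose (i:ℕ)):ℝ) * ((δ/D)*x+(-β/D)*y)^(s-(i:ℕ)) * ((-γ/D)*x+(α/D)*y)^(i:ℕ))
      = M'.mulVec (fun k : Fin (s+1) => ((s.choose (k:ℕ)):ℝ) * x^(s-(k:ℕ)) * y^(k:ℕ)) :=
    fun x y => vvL s (δ/D) (-β/D) (-γ/D) (α/D) x y
  -- M' * M = 1
  have hMM : M' * M = 1 := by
    have hvan : ∀ x y : ℝ, (M' * M - 1).mulVec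
        (fun k : Fin (s+1) => ((s.choose (k:ℕ)):ℝ) * x^(s-(k:ℕ)) * y^(k:ℕ)) = 0 := by
      intro x y
      rw [Matrix.sub_mulVec, Matrix.one_mulVec, ← Matrix.mulVec_mulVec, ← hMv x y]
      have := hM'v (α*x+β*y) (γ*x+δ*y)
      rw [← this]
      have ex : (δ/D)*(α*x+β*y)+(-β/D)*(γ*x+δ*y) = x := by field_simp; ring
      have ey : (-γ/D)*(α*x+β*y)+(α/D)*(γ*x+δ*y) = y := by field_simp; ring
      rw [ex, ey]
      simp
    have h0 := mulVec_van s (M' * M - 1) hvan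
    exact sub_eq_zero.mp h0
  have hMM2 : M * M' = 1 := mul_eq_one_comm.mp hMM
  have hcongr : B = Mᵀ * A * M := by
    have h0 : B - Mᵀ * A * M = 0 := by
      apply bilin_van s
      intro x y x' y'
      rw [Matrix.sub_mulVec, dotProduct_sub, key x y x' y']
      rw [hMv x y, hMv x' y']
      rw [← Matrix.mulVec_mulVec, ← Matrix.mulVec_mulVec]
      rw [Matrix.dotProduct_mulVec _ Mᵀ, Matrix.vecMul_transpose]
      exact sub_self _
    exact (sub_eq_zero.mp h0)
  exact ⟨M, M', hMM, hMM2, hcongr⟩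


noncomputable section
variable {n : ℕ}

lemma dot_eq_inner (u w : EuclideanSpace ℝ (Fin n)) :
    (inner ℝ u w : ℝ) = (WithLp.equiv 2 _ u) ⬝ᵥ (WithLp.equiv 2 _ w) := by
  simp [PiLp.inner_apply, RCLike.inner_apply, dotProduct, mul_comm]

lemma toEuclideanLin_eigen (C : Matrix (Fin n) (Fin n) ℝ) (hC : C.IsHermitian) (i : Fin n) :
    Matrix.toEuclideanLin C (hC.eigenvectorBasis i)
      = hC.eigenvalues i • hC.eigenvectorBasis i := by
  rw [Matrix.toEuclideanLin_apply]
  have h1 : (WithLp.equiv 2 (Fin n → ℝ)) (hC.eigenvectorBasis i) = ⇑(hC.eigenvectorBasis i) := rfl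
  rw [hC.mulVec_eigenvectorBasis]
  rfl

lemma quad_expansion (C : Matrix (Fin n) (Fin n) ℝ) (hC : C.IsHermitian)
    (x : EuclideanSpace ℝ (Fin n)) :
    (inner ℝ x ((Matrix.toEuclideanLin C) x) : ℝ)
      = ∑ i, hC.eigenvalues i * (inner ℝ (hC.eigenvectorBasis i) x : ℝ)^2 := by
  set v := hC.eigenvectorBasis with hv
  calc (inner ℝ x ((Matrix.toEuclideanLin C) x) : ℝ)
      = inner ℝ x ((Matrix.toEuclideanLin C) (∑ i, (inner ℝ (v i) x : ℝ) • v i)) := by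
        exact congrArg (fun y => (inner ℝ x ((Matrix.toEuclideanLin C) y) : ℝ))
          (v.sum_repr' x).symm
    _ = ∑ i, (inner ℝ (v i) x : ℝ) * (inner ℝ x ((Matrix.toEuclideanLin C) (v i)) : ℝ) := by
        rw [map_sum, inner_sum]
        apply Finset.sum_congr rfl
        intro i _
        rw [_root_.map_smul, real_inner_smul_right]
    _ = ∑ i, hC.eigenvalues i * (inner ℝ (v i) x : ℝ)^2 := by
        apply Finset.sum_congr rfl
        intro i _
        rw [toEuclideanLin_eigen C hC i, real_inner_smul_right, real_inner_comm]
        ring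

lemma coord_zero (v : OrthonormalBasis (Fin n) ℝ (EuclideanSpace ℝ (Fin n)))
    (S : Set (Fin n)) (x : EuclideanSpace ℝ (Fin n))
    (hx : x ∈ Submodule.span ℝ (v '' S)) (j : Fin n) (hj : j ∉ S) :
    (inner ℝ (v j) x : ℝ) = 0 := by
  have hker : Submodule.span ℝ (v '' S) ≤ LinearMap.ker ((innerSL ℝ (v j)).toLinearMap) := by
    rw [Submodule.span_le]
    rintro u ⟨i, hi, rfl⟩
    simp only [SetLike.mem_coe, LinearMap.mem_ker, ContinuousLinearMap.coe_coe, innerSL_apply_apply]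
    exact v.orthonormal.2 (fun h => hj (h ▸ hi))
  have := hker hx
  simpa using this

lemma x_eq_zero (v : OrthonormalBasis (Fin n) ℝ (EuclideanSpace ℝ (Fin n)))
    (x : EuclideanSpace ℝ (Fin n)) (h : ∀ i, (inner ℝ (v i) x : ℝ) = 0) : x = 0 := by
  rw [← v.sum_repr' x]
  simp only [h, zero_smul, Finset.sum_const_zero]

lemma quad_pos_on_span (C : Matrix (Fin n) (Fin n) ℝ) (hC : C.IsHermitian) (σ : ℝ)
    (x : EuclideanSpace ℝ (Fin n))
    (hx : x ∈ Submodule.span ℝ (hC.eigenvectorBasis '' {i | 0 < σ * hC.eigenvalues i}))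
    (hx0 : x ≠ 0) :
    0 < σ * (inner ℝ x ((Matrix.toEuclideanLin C) x) : ℝ) := by
  rw [quad_expansion C hC x, Finset.mul_sum]
  have hterm : ∀ i : Fin n,
      0 ≤ σ * (hC.eigenvalues i * (inner ℝ (hC.eigenvectorBasis i) x : ℝ)^2) := by
    intro i
    by_cases hi : 0 < σ * hC.eigenvalues i
    · have hsq : (0:ℝ) ≤ (inner ℝ (hC.eigenvectorBasis i) x : ℝ)^2 := sq_nonneg _
      nlinarith
    · rw [coord_zero _ _ _ hx i hi]
      simp
  have hex : ∃ i, (inner ℝ (hC.eigenvectorBasis i) x : ℝ) ≠ 0 := by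
    by_contra hall
    push_neg at hall
    exact hx0 (x_eq_zero hC.eigenvectorBasis x hall)
  obtain ⟨i, hi0⟩ := hex
  have hiS : 0 < σ * hC.eigenvalues i := by
    by_contra h
    exact hi0 (coord_zero _ _ _ hx i h)
  refine Finset.sum_pos' (fun j _ => hterm j) ⟨i, Finset.mem_univ i, ?_⟩
  have hsq : 0 < (inner ℝ (hC.eigenvectorBasis i) x : ℝ)^2 := by positivity
  nlinarith

lemma quad_nonpos_on_span (C : Matrix (Fin n) (Fin n) ℝ) (hC : C.IsHermitian) (σ : ℝ)
    (x : EuclideanSpace ℝ (Fin n))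
    (hx : x ∈ Submodule.span ℝ (hC.eigenvectorBasis '' {i | ¬ 0 < σ * hC.eigenvalues i})) :
    σ * (inner ℝ x ((Matrix.toEuclideanLin C) x) : ℝ) ≤ 0 := by
  rw [quad_expansion C hC x, Finset.mul_sum]
  apply Finset.sum_nonpos
  intro i _
  by_cases hi : 0 < σ * hC.eigenvalues i
  · rw [coord_zero _ _ _ hx i (by simp [hi])]
    simp
  · push_neg at hi
    calc σ * (hC.eigenvalues i * (inner ℝ (hC.eigenvectorBasis i) x : ℝ)^2)
        = (σ * hC.eigenvalues i) * (inner ℝ (hC.eigenvectorBasis i) x : ℝ)^2 := by ring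
    _ ≤ 0 := mul_nonpos_of_nonpos_of_nonneg hi (sq_nonneg _)

end

noncomputable section
open Submodule

lemma toEuclideanLin_comp (M N : Matrix (Fin n) (Fin n) ℝ) (x : EuclideanSpace ℝ (Fin n)) :
    Matrix.toEuclideanLin M (Matrix.toEuclideanLin N x) = Matrix.toEuclideanLin (M * N) x := by
  simp only [Matrix.toEuclideanLin_apply, Equiv.apply_symm_apply, Matrix.mulVec_mulVec]

lemma toEuclideanLin_one' (x : EuclideanSpace ℝ (Fin n)) :
    Matrix.toEuclideanLin (1 : Matrix (Fin n) (Fin n) ℝ) x = x := by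
  rw [Matrix.toEuclideanLin_apply, Matrix.one_mulVec]

lemma inertia_le (A B : Matrix (Fin n) (Fin n) ℝ) (hA : A.IsHermitian) (hB : B.IsHermitian)
    (M M' : Matrix (Fin n) (Fin n) ℝ) (h1 : M' * M = 1) (h2 : M * M' = 1) (σ : ℝ)
    (hq : ∀ x : EuclideanSpace ℝ (Fin n),
      (inner ℝ x ((Matrix.toEuclideanLin B) x) : ℝ)
        = (inner ℝ ((Matrix.toEuclideanLin M) x)
            ((Matrix.toEuclideanLin A) ((Matrix.toEuclideanLin M) x)) : ℝ)) :
    Nat.card {i // 0 < σ * hA.eigenvalues i} ≤ Nat.card {i // 0 < σ * hB.eigenvalues i} := by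
  classical
  by_contra hlt
  push_neg at hlt
  set SA : Set (Fin n) := {i | 0 < σ * hA.eigenvalues i} with hSA
  set SB : Set (Fin n) := {i | 0 < σ * hB.eigenvalues i} with hSB
  set P : Submodule ℝ (EuclideanSpace ℝ (Fin n)) :=
    Submodule.span ℝ (hA.eigenvectorBasis '' SA) with hP
  set W : Submodule ℝ (EuclideanSpace ℝ (Fin n)) :=
    Submodule.span ℝ (hB.eigenvectorBasis '' SBᶜ) with hW
  set U : Submodule ℝ (EuclideanSpace ℝ (Fin n)) :=
    P.map (Matrix.toEuclideanLin M') with hU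
  -- dimension of spans of orthonormal subfamilies
  have hdim : ∀ (C : Matrix (Fin n) (Fin n) ℝ) (hC : C.IsHermitian) (S : Set (Fin n)),
      Module.finrank ℝ (Submodule.span ℝ (hC.eigenvectorBasis '' S))
        = Nat.card S := by
    intro C hC S
    rw [Set.image_eq_range]
    have hli : LinearIndependent ℝ (fun i : S => hC.eigenvectorBasis i) :=
      (hC.eigenvectorBasis.orthonormal.linearIndependent).comp _ Subtype.val_injective
    rw [finrank_span_eq_card hli, ← Nat.card_eq_fintype_card]
  have hdimP : Module.finrank ℝ P = Nat.card SA := hdim A hA SA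
  have hdimW : Module.finrank ℝ W = Nat.card ↥(SBᶜ) := hdim B hB SBᶜ
  -- U has the same dimension as P
  have hUP : U.map (Matrix.toEuclideanLin M) = P := by
    rw [hU, ← Submodule.map_comp]
    have : (Matrix.toEuclideanLin M).comp (Matrix.toEuclideanLin M') = LinearMap.id := by
      apply LinearMap.ext
      intro x
      simp only [LinearMap.comp_apply, LinearMap.id_apply]
      rw [toEuclideanLin_comp, h2, toEuclideanLin_one']
    rw [this, Submodule.map_id]
  have hdimU : Module.finrank ℝ U = Nat.card SA := by
    have hle1 : Module.finrank ℝ U ≤ Module.finrank ℝ P := by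
      rw [hU]; exact Submodule.finrank_map_le _ _
    have hle2 : Module.finrank ℝ P ≤ Module.finrank ℝ U := by
      conv_lhs => rw [← hUP]
      exact Submodule.finrank_map_le _ _
    omega
  -- dimension count
  have hfinE : Module.finrank ℝ (EuclideanSpace ℝ (Fin n)) = n := by
    rw [finrank_euclideanSpace, Fintype.card_fin]
  have hcardB : Nat.card ↥(SBᶜ) = n - Nat.card SB := by
    rw [Nat.card_eq_fintype_card, Nat.card_eq_fintype_card, Fintype.card_compl_set,
      Fintype.card_fin]
  have hne : U ⊓ W ≠ ⊥ := by
    intro hbot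
    have hsupinf := Submodule.finrank_sup_add_finrank_inf_eq U W
    rw [hbot, finrank_bot] at hsupinf
    have hle := Submodule.finrank_le (U ⊔ W)
    rw [hfinE] at hle
    have hcard : Nat.card SB < Nat.card SA := hlt
    have hSBle : Nat.card SB ≤ n := by
      rw [Nat.card_eq_fintype_card]
      calc Fintype.card SB ≤ Fintype.card (Fin n) := Fintype.card_subtype_le _
      _ = n := Fintype.card_fin n
    omega
  obtain ⟨x, hxUW, hx0⟩ := (Submodule.ne_bot_iff _).mp hne
  have hxU : x ∈ U := (Submodule.mem_inf.mp hxUW).1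
  have hxW : x ∈ W := (Submodule.mem_inf.mp hxUW).2
  obtain ⟨w, hwP, hwx⟩ := Submodule.mem_map.mp hxU
  have hw0 : w ≠ 0 := by
    intro h
    apply hx0
    rw [← hwx, h, map_zero]
  have hMx : Matrix.toEuclideanLin M x = w := by
    rw [← hwx, toEuclideanLin_comp, h2, toEuclideanLin_one']
  have hposA := quad_pos_on_span A hA σ w hwP hw0
  have hQB : 0 < σ * (inner ℝ x ((Matrix.toEuclideanLin B) x) : ℝ) := by
    rw [hq x, hMx]
    exact hposA
  have hnonpos := quad_nonpos_on_span B hB σ x hxW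
  linarith


section GLUE2
variable {n : ℕ}
lemma inner_toEuclideanLin (C : Matrix (Fin n) (Fin n) ℝ) (x y : EuclideanSpace ℝ (Fin n)) :
    (inner ℝ x (Matrix.toEuclideanLin C y) : ℝ)
      = (WithLp.equiv 2 _ x) ⬝ᵥ (C *ᵥ (WithLp.equiv 2 _ y)) := by
  rw [Matrix.toEuclideanLin_apply, dot_eq_inner]
  rfl

lemma quad_transfer (A B M : Matrix (Fin n) (Fin n) ℝ) (hBAM : B = Mᵀ * A * M)
    (x : EuclideanSpace ℝ (Fin n)) :
    (inner ℝ x ((Matrix.toEuclideanLin B) x) : ℝ)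
      = (inner ℝ ((Matrix.toEuclideanLin M) x)
          ((Matrix.toEuclideanLin A) ((Matrix.toEuclideanLin M) x)) : ℝ) := by
  rw [inner_toEuclideanLin, inner_toEuclideanLin, (show ∀ x, WithLp.equiv 2 (Fin n → ℝ) (Matrix.toEuclideanLin M x) = M *ᵥ WithLp.equiv 2 (Fin n → ℝ) x from fun _ => rfl),
    hBAM]
  rw [← Matrix.mulVec_mulVec, ← Matrix.mulVec_mulVec]
  rw [Matrix.dotProduct_mulVec _ Mᵀ, Matrix.vecMul_transpose]

end GLUE2

theorem stmt7 (s : ℕ) (a b : ℕ → ℝ) (α β γ δ : ℝ) (hdet : α*δ - β*γ ≠ 0)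
    (hq : ∀ x y : ℝ,
      ∑ j ∈ Finset.range (2*s+1), (Nat.choose (2*s) j : ℝ) * b j * x^(2*s-j) * y^j
      = ∑ j ∈ Finset.range (2*s+1),
          (Nat.choose (2*s) j : ℝ) * a j * (α*x+β*y)^(2*s-j) * (γ*x+δ*y)^j)
    (A B : Matrix (Fin (s+1)) (Fin (s+1)) ℝ)
    (hA : A = Matrix.of fun i j : Fin (s+1) => a ((i:ℕ)+(j:ℕ)))
    (hB : B = Matrix.of fun i j : Fin (s+1) => b ((i:ℕ)+(j:ℕ)))
    (hAh : A.IsHermitian) (hBh : B.IsHermitian) :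
    Nat.card {i // 0 < hAh.eigenvalues i} = Nat.card {i // 0 < hBh.eigenvalues i} ∧
    Nat.card {i // hAh.eigenvalues i < 0} = Nat.card {i // hBh.eigenvalues i < 0} := by
  obtain ⟨M, M', hMM, hMM2, hBAM⟩ := congruence s a b α β γ δ hdet hq A B hA hB
  have hAeq : A = M'ᵀ * B * M' := by
    rw [hBAM]
    calc A = 1ᵀ * A * 1 := by simp
    _ = (M*M')ᵀ * A * (M*M') := by rw [hMM2]
    _ = M'ᵀ * (Mᵀ * A * M) * M' := by rw [Matrix.transpose_mul]; noncomm_ring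
  have hqf := fun x => quad_transfer A B M hBAM x
  have hqb := fun x => quad_transfer B A M' hAeq x
  have key : ∀ σ : ℝ, Nat.card {i // 0 < σ * hAh.eigenvalues i}
      = Nat.card {i // 0 < σ * hBh.eigenvalues i} := by
    intro σ
    exact le_antisymm
      (inertia_le A B hAh hBh M M' hMM hMM2 σ hqf)
      (inertia_le B A hBh hAh M' M hMM2 hMM σ hqb)
  constructor
  · have h1 := key 1
    have e : ∀ (f : Fin (s+1) → ℝ),
        Nat.card {i // 0 < (1:ℝ) * f i} = Nat.card {i // 0 < f i} := fun f =>
      Nat.card_congr (Equiv.subtypeEquivRight (fun i => by rw [one_mul]))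
    rw [e hAh.eigenvalues, e hBh.eigenvalues] at h1
    exact h1
  · have h1 := key (-1)
    have e : ∀ (f : Fin (s+1) → ℝ),
        Nat.card {i // 0 < (-1:ℝ) * f i} = Nat.card {i // f i < 0} := fun f =>
      Nat.card_congr (Equiv.subtypeEquivRight (fun i => by rw [neg_one_mul]; exact neg_pos))
    rw [e hAh.eigenvalues, e hBh.eigenvalues] at h1
    exact h1
end
end

section
/- If p ∈ F_{2,2s} has an honest representation with badge (a,b) (a positive and b negative coefficients of 2s-th powers of real linear forms), then the signature (p_H, n_H) of the catalecticant H_p satisfies p_H ≤ a and n_H ≤ b. -/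
private lemma sum_dot {n : ℕ} {ι : Type*} (s : Finset ι) (f : ι → Fin n → ℝ) (v : Fin n → ℝ) :
    dotProduct (∑ i ∈ s, f i) v = ∑ i ∈ s, dotProduct (f i) v := by
  simp only [dotProduct, Finset.sum_apply, Finset.sum_mul]
  rw [Finset.sum_comm]

private lemma dot_sum {n : ℕ} {ι : Type*} (s : Finset ι) (v : Fin n → ℝ) (f : ι → Fin n → ℝ) :
    dotProduct v (∑ i ∈ s, f i) = ∑ i ∈ s, dotProduct v (f i) := by
  simp only [dotProduct, Finset.sum_apply, Finset.mul_sum]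
  rw [Finset.sum_comm]

private lemma mulVec_sum' {n : ℕ} {ι : Type*} (s : Finset ι) (A : Matrix (Fin n) (Fin n) ℝ)
    (f : ι → Fin n → ℝ) : A.mulVec (∑ i ∈ s, f i) = ∑ i ∈ s, A.mulVec (f i) := by
  rw [← Matrix.mulVecLin_apply, map_sum]
  simp [Matrix.mulVecLin_apply]

open Matrix in
lemma aux_core {n r : ℕ} (A : Matrix (Fin n) (Fin n) ℝ) (hA : A.IsHermitian)
    (lam : Fin r → ℝ) (w : Fin r → Fin n → ℝ)
    (hdecomp : ∀ x : Fin n → ℝ,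
      dotProduct x (A.mulVec x) = ∑ k, lam k * (dotProduct (w k) x)^2)
    (ε : ℝ) (hε : ε * ε = 1) :
    Nat.card {i // 0 < ε * hA.eigenvalues i} ≤ Nat.card {k // 0 < ε * lam k} := by
  classical
  by_contra hlt
  push_neg at hlt
  set S := {i // 0 < ε * hA.eigenvalues i}
  set T := {k // 0 < ε * lam k}
  set u : Fin n → Fin n → ℝ := fun i => ⇑(hA.eigenvectorBasis i) with hu
  have horth : ∀ i j, dotProduct (u i) (u j) = if i = j then 1 else 0 := by
    intro i j
    have h := hA.eigenvectorBasis.orthonormal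
    rw [orthonormal_iff_ite] at h
    rw [← h i j]
    simp [PiLp.inner_apply, dotProduct, u, mul_comm]
  set M : Matrix T S ℝ := Matrix.of fun t i => dotProduct (w t) (u i) with hM
  have hninj : ¬ Function.Injective M.mulVecLin := by
    intro hinj
    have := LinearMap.finrank_le_finrank_of_injective hinj
    simp only [Module.finrank_fintype_fun_eq_card] at this
    rw [Nat.card_eq_fintype_card, Nat.card_eq_fintype_card] at hlt
    omega
  rw [Function.not_injective_iff] at hninj
  obtain ⟨c₁, c₂, hc12, hne⟩ := hninj
  set c : S → ℝ := c₁ - c₂ with hc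
  have hc0 : c ≠ 0 := sub_ne_zero.mpr hne
  have hMc : M.mulVec c = 0 := by
    have h2 : M.mulVecLin c = M.mulVecLin c₁ - M.mulVecLin c₂ := by
      simp [hc, map_sub]
    simpa [hc12, sub_self] using h2
  set x : Fin n → ℝ := ∑ i : S, c i • u i with hx
  have hdotc : ∀ i : S, dotProduct (u i) x = c i := by
    intro i
    rw [hx, dot_sum]
    rw [Finset.sum_eq_single i]
    · rw [dotProduct_smul, horth]; simp
    · intro j _ hji
      rw [dotProduct_smul, horth]
      simp [(Subtype.coe_injective.ne_iff).mpr (Ne.symm hji)]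
    · simp
  have hwx : ∀ t : T, dotProduct (w t) x = 0 := by
    intro t
    have h := congrFun hMc t
    simp only [Matrix.mulVec, Pi.zero_apply] at h
    rw [hx, dot_sum]
    have heq : ∀ i : S, dotProduct (w t) (c i • u i) = M t i * c i := by
      intro i
      rw [dotProduct_smul]
      simp [hM, mul_comm]
    calc ∑ i : S, dotProduct (w ↑t) (c i • u ↑i)
        = ∑ i : S, M t i * c i := Finset.sum_congr rfl fun i _ => heq i
      _ = 0 := by simpa [dotProduct] using h
  have hAx : A.mulVec x = ∑ i : S, (c i * hA.eigenvalues i) • u i := by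
    rw [hx, mulVec_sum']
    apply Finset.sum_congr rfl
    intro i _
    rw [Matrix.mulVec_smul, hA.mulVec_eigenvectorBasis]
    rw [smul_smul, mul_comm]
  have hquad : dotProduct x (A.mulVec x) = ∑ i : S, hA.eigenvalues i * (c i)^2 := by
    rw [hAx, hx, sum_dot]
    apply Finset.sum_congr rfl
    intro i _
    rw [smul_dotProduct, dot_sum]
    rw [Finset.sum_eq_single i]
    · rw [dotProduct_smul, horth]; simp; ring
    · intro j _ hji
      have hne2 : (j : Fin n) ≠ (i : Fin n) := (Subtype.coe_injective.ne_iff).mpr hji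
      rw [dotProduct_smul, horth]
      simp [hne2, hne2.symm]
    · simp
  have hcex : ∃ i : S, c i ≠ 0 := by
    by_contra hall
    push_neg at hall
    exact hc0 (funext hall)
  obtain ⟨i0, hi0⟩ := hcex
  have hpos : 0 < ε * dotProduct x (A.mulVec x) := by
    rw [hquad, Finset.mul_sum]
    apply Finset.sum_pos'
    · intro i _
      have h1 : 0 ≤ ε * hA.eigenvalues i := le_of_lt i.2
      have h2 : 0 ≤ (c i)^2 := sq_nonneg _
      calc (0:ℝ) ≤ (ε * hA.eigenvalues i) * (c i)^2 := mul_nonneg h1 h2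
        _ = ε * (hA.eigenvalues i * (c i)^2) := by ring
    · refine ⟨i0, Finset.mem_univ _, ?_⟩
      have h1 : 0 < ε * hA.eigenvalues i0 := i0.2
      have h2 : 0 < (c i0)^2 := by positivity
      have h3 : ε * (hA.eigenvalues i0 * (c i0)^2) = (ε * hA.eigenvalues i0) * (c i0)^2 := by
        ring
      rw [h3]
      exact mul_pos h1 h2
  have hnonpos : ε * dotProduct x (A.mulVec x) ≤ 0 := by
    rw [hdecomp x, Finset.mul_sum]
    apply Finset.sum_nonpos
    intro k _
    by_cases hk : 0 < ε * lam k
    · have h := hwx ⟨k, hk⟩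
      simp only at h
      rw [h]
      simp
    · push_neg at hk
      have h3 : ε * (lam k * dotProduct (w k) x ^ 2) = (ε * lam k) * dotProduct (w k) x ^ 2 := by
        ring
      rw [h3]
      exact mul_nonpos_of_nonpos_of_nonneg hk (sq_nonneg _)
  linarith

lemma coeff_extract (s r : ℕ) (a : ℕ → ℝ) (lam α β : Fin r → ℝ)
    (hrep : ∀ x y : ℝ,
      ∑ j ∈ Finset.range (2*s+1), (Nat.choose (2*s) j : ℝ) * a j * x^(2*s-j) * y^j
        = ∑ k : Fin r, lam k * (α k * x + β k * y)^(2*s)) :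
    ∀ m, m ≤ 2*s → a m = ∑ k, lam k * (α k ^ (2*s - m) * β k ^ m) := by
  intro m hm
  set p : Polynomial ℝ := ∑ j ∈ Finset.range (2*s+1),
      Polynomial.C ((Nat.choose (2*s) j : ℝ) * a j) * Polynomial.X ^ (2*s - j) with hp
  set q : Polynomial ℝ := ∑ k : Fin r,
      Polynomial.C (lam k) * (Polynomial.C (α k) * Polynomial.X + Polynomial.C (β k)) ^ (2*s) with hq
  have heval : ∀ x : ℝ, p.eval x = q.eval x := by
    intro x
    have h := hrep x 1
    simp only [one_pow, mul_one] at h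
    simp only [hp, hq, Polynomial.eval_finset_sum, Polynomial.eval_mul, Polynomial.eval_C,
      Polynomial.eval_pow, Polynomial.eval_X, Polynomial.eval_add]
    rw [h]
  have hpq : p = q := Polynomial.funext heval
  have hcop : p.coeff (2*s - m) = (Nat.choose (2*s) m : ℝ) * a m := by
    rw [hp, Polynomial.finset_sum_coeff]
    rw [Finset.sum_eq_single m]
    · rw [Polynomial.coeff_C_mul, Polynomial.coeff_X_pow, if_pos rfl, mul_one]
    · intro j hj hjm
      have hj' : j ≤ 2*s := by
        have := Finset.mem_range.mp hj; omega
      simp only [Polynomial.coeff_C_mul, Polynomial.coeff_X_pow]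
      rw [if_neg (by omega)]
      ring
    · intro hmm
      exact absurd (Finset.mem_range.mpr (by omega)) hmm
  have hcoq : q.coeff (2*s - m)
      = ∑ k, lam k * (α k ^ (2*s - m) * β k ^ m) * (Nat.choose (2*s) m : ℝ) := by
    rw [hq, Polynomial.finset_sum_coeff]
    refine Finset.sum_congr rfl fun k _ => ?_
    rw [Polynomial.coeff_C_mul, add_pow, Polynomial.finset_sum_coeff]
    have hterm : ∀ j, (Polynomial.C (α k) * Polynomial.X)^j * Polynomial.C (β k)^(2*s - j)
        * ((Nat.choose (2*s) j : ℕ) : Polynomial ℝ)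
        = Polynomial.C (α k ^ j * β k ^ (2*s - j) * (Nat.choose (2*s) j : ℝ)) * Polynomial.X ^ j := by
      intro j
      rw [mul_pow, ← Polynomial.C_pow, ← Polynomial.C_pow, ← Polynomial.C_eq_natCast]
      rw [Polynomial.C_mul, Polynomial.C_mul]
      ring
    rw [Finset.sum_eq_single (2*s - m)]
    · rw [hterm, Polynomial.coeff_C_mul, Polynomial.coeff_X_pow, if_pos rfl]
      have h1 : 2*s - (2*s - m) = m := by omega
      have h2 : Nat.choose (2*s) (2*s - m) = Nat.choose (2*s) m := Nat.choose_symm hm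
      rw [h1, h2]
      ring
    · intro j hj hjm
      rw [hterm, Polynomial.coeff_C_mul, Polynomial.coeff_X_pow, if_neg (fun h => hjm h.symm)]
      ring
    · intro hmm
      exact absurd (Finset.mem_range.mpr (by omega)) hmm
  have hch : ((Nat.choose (2*s) m : ℝ)) ≠ 0 :=
    Nat.cast_ne_zero.mpr (Nat.choose_pos hm).ne'
  have hkey : (Nat.choose (2*s) m : ℝ) * a m
      = (Nat.choose (2*s) m : ℝ) * ∑ k, lam k * (α k ^ (2*s - m) * β k ^ m) := by
    rw [← hcop, hpq, hcoq, Finset.mul_sum]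
    exact Finset.sum_congr rfl fun k _ => by ring
  exact mul_left_cancel₀ hch hkey

theorem stmt8 (s r : ℕ) (a : ℕ → ℝ) (lam α β : Fin r → ℝ)
    (hlam : ∀ k, lam k ≠ 0)
    (hdist : ∀ k l, k ≠ l → α k * β l - α l * β k ≠ 0)
    (hrep : ∀ x y : ℝ,
      ∑ j ∈ Finset.range (2*s+1), (Nat.choose (2*s) j : ℝ) * a j * x^(2*s-j) * y^j
        = ∑ k : Fin r, lam k * (α k * x + β k * y)^(2*s))
    (A : Matrix (Fin (s+1)) (Fin (s+1)) ℝ)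
    (hA : A = Matrix.of fun i j : Fin (s+1) => a ((i:ℕ)+(j:ℕ)))
    (hAh : A.IsHermitian) :
    Nat.card {i // 0 < hAh.eigenvalues i} ≤ Nat.card {k : Fin r // 0 < lam k} ∧
    Nat.card {i // hAh.eigenvalues i < 0} ≤ Nat.card {k : Fin r // lam k < 0} := by
  have ham := coeff_extract s r a lam α β hrep
  set w : Fin r → Fin (s+1) → ℝ := fun k i => α k ^ (s - (i:ℕ)) * β k ^ (i:ℕ) with hw
  have key : ∀ i j : Fin (s+1), a ((i:ℕ)+(j:ℕ)) = ∑ k, lam k * (w k i * w k j) := by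
    intro i j
    have hi : (i:ℕ) ≤ s := Nat.lt_succ_iff.mp i.isLt
    have hj : (j:ℕ) ≤ s := Nat.lt_succ_iff.mp j.isLt
    rw [ham ((i:ℕ)+(j:ℕ)) (by omega)]
    refine Finset.sum_congr rfl fun k _ => ?_
    have h1 : 2*s - ((i:ℕ)+(j:ℕ)) = (s - (i:ℕ)) + (s - (j:ℕ)) := by omega
    rw [h1, pow_add, pow_add, hw]
    ring
  have hdecomp : ∀ x : Fin (s+1) → ℝ,
      dotProduct x (A.mulVec x) = ∑ k, lam k * (dotProduct (w k) x)^2 := by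
    intro x
    simp only [dotProduct, Matrix.mulVec, Matrix.of_apply, hA, pow_two]
    calc ∑ i : Fin (s+1), x i * ∑ j : Fin (s+1), a ((i:ℕ)+(j:ℕ)) * x j
        = ∑ i : Fin (s+1), ∑ j : Fin (s+1), ∑ k : Fin r,
            lam k * (w k i * x i) * (w k j * x j) := by
          refine Finset.sum_congr rfl fun i _ => ?_
          rw [Finset.mul_sum]
          refine Finset.sum_congr rfl fun j _ => ?_
          rw [key i j, Finset.sum_mul, Finset.mul_sum]
          exact Finset.sum_congr rfl fun k _ => by ring
      _ = ∑ k : Fin r, ∑ i : Fin (s+1), ∑ j : Fin (s+1),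
            lam k * (w k i * x i) * (w k j * x j) := by
          rw [show (∑ i : Fin (s+1), ∑ j : Fin (s+1), ∑ k : Fin r,
              lam k * (w k i * x i) * (w k j * x j))
            = ∑ i : Fin (s+1), ∑ k : Fin r, ∑ j : Fin (s+1),
              lam k * (w k i * x i) * (w k j * x j) from
            Finset.sum_congr rfl fun i _ => Finset.sum_comm]
          exact Finset.sum_comm
      _ = ∑ k : Fin r, lam k * ((∑ i, w k i * x i) * (∑ j, w k j * x j)) := by
          refine Finset.sum_congr rfl fun k _ => ?_
          rw [Finset.sum_mul_sum, Finset.mul_sum]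
          refine Finset.sum_congr rfl fun i _ => ?_
          rw [Finset.mul_sum]
          exact Finset.sum_congr rfl fun j _ => by ring
  constructor
  · have h := aux_core A hAh lam w hdecomp 1 (by norm_num)
    calc Nat.card {i // 0 < hAh.eigenvalues i}
        = Nat.card {i // 0 < 1 * hAh.eigenvalues i} :=
          Nat.card_congr (Equiv.subtypeEquivRight (by intro i; rw [one_mul]))
      _ ≤ Nat.card {k // 0 < 1 * lam k} := h
      _ = Nat.card {k : Fin r // 0 < lam k} :=
          Nat.card_congr (Equiv.subtypeEquivRight (by intro k; rw [one_mul]))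
  · have h := aux_core A hAh lam w hdecomp (-1) (by norm_num)
    calc Nat.card {i // hAh.eigenvalues i < 0}
        = Nat.card {i // 0 < (-1) * hAh.eigenvalues i} :=
          Nat.card_congr (Equiv.subtypeEquivRight (by intro i; rw [neg_one_mul, neg_pos]))
      _ ≤ Nat.card {k // 0 < (-1) * lam k} := h
      _ = Nat.card {k : Fin r // lam k < 0} :=
          Nat.card_congr (Equiv.subtypeEquivRight (by intro k; rw [neg_one_mul, neg_pos]))
end

section
/- For -3/5 < λ ≤ 0, the sextic q_λ(x,y) = 6x⁵y + 20λx³y³ + 6xy⁵ has no length-4 representation as a linear combination of sixth powers of real linear forms: there is no quartic h(x,y) = Σ c_i x^{4-i}y^i with four distinct real roots in P¹ lying in the kernel of the 3×5 catalecticant map of q_λ. Consequently the length of q_λ is at least 5. -/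
lemma aux1 (l : ℝ) (hl1 : -3/5 < l) (hl2 : l ≤ 0) :
    ¬ ∃ (c : ℕ → ℝ) (e f : Fin 4 → ℝ),
        (∀ i j, i ≠ j → e i * f j - e j * f i ≠ 0) ∧
        (∀ x y : ℝ, ∑ i ∈ Finset.range 5, c i * x^(4-i) * y^i
          = ∏ i : Fin 4, (e i * x + f i * y)) ∧
        c 1 + l * c 3 = 0 ∧ c 0 + l * c 2 + c 4 = 0 ∧ l * c 1 + c 3 = 0 := by
  rintro ⟨c, e, f, hind, hprod, hk1, hk2, hk3⟩
  have hl2' : (1 - l^2) ≠ 0 := by nlinarith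
  have hc3 : c 3 = 0 := by
    have h : (1 - l^2) * c 3 = 0 := by linear_combination hk3 - l * hk1
    exact (mul_eq_zero.mp h).resolve_left hl2'
  have hc1 : c 1 = 0 := by
    rw [hc3] at hk3
    rcases mul_eq_zero.mp (by linarith : l * c 1 = 0) with h | h
    · rw [h] at hk1; rw [hc3] at hk1; linarith
    · exact h
  have E0 := hprod 0 1
  have E1 := hprod 1 1
  have Em1 := hprod (-1) 1
  have E2 := hprod 2 1
  have Em2 := hprod (-2) 1
  norm_num [Finset.sum_range_succ, Fin.prod_univ_four] at E0 E1 Em1 E2 Em2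
  have hc0 : c 0 = e 0 * e 1 * e 2 * e 3 := by
    linear_combination (E2 + Em2 - 4*E1 - 4*Em1 + 6*E0)/24
  have hc1s : c 1 = e 0 * e 1 * e 2 * f 3 + e 0 * e 1 * f 2 * e 3
      + e 0 * f 1 * e 2 * e 3 + f 0 * e 1 * e 2 * e 3 := by
    linear_combination (E2 - Em2 - 2*E1 + 2*Em1)/12
  -- all e i nonzero
  have hef : ∀ i j : Fin 4, i ≠ j → e i = 0 → (f i ≠ 0 ∧ e j ≠ 0) := by
    intro i j hij hei
    constructor
    · intro hfi; exact hind i j hij (by rw [hei, hfi]; ring)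
    · intro hej; exact hind i j hij (by rw [hei, hej]; ring)
  have he : ∀ i : Fin 4, e i ≠ 0 := by
    rw [hc1s] at hc1
    intro i hei
    fin_cases i
    · have hei0 : e 0 = 0 := hei
      have h1 := hef 0 1 (by decide) hei0
      have h2 := hef 0 2 (by decide) hei0
      have h3 := hef 0 3 (by decide) hei0
      exact mul_ne_zero h1.1 (mul_ne_zero (mul_ne_zero h1.2 h2.2) h3.2)
        (by linear_combination hc1 - (e 1 * e 2 * f 3 + e 1 * f 2 * e 3 + f 1 * e 2 * e 3) * hei0)
    · have hei0 : e 1 = 0 := hei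
      have h1 := hef 1 0 (by decide) hei0
      have h2 := hef 1 2 (by decide) hei0
      have h3 := hef 1 3 (by decide) hei0
      exact mul_ne_zero h1.1 (mul_ne_zero (mul_ne_zero h1.2 h2.2) h3.2)
        (by linear_combination hc1 - (e 0 * e 2 * f 3 + e 0 * f 2 * e 3 + f 0 * e 2 * e 3) * hei0)
    · have hei0 : e 2 = 0 := hei
      have h1 := hef 2 0 (by decide) hei0
      have h2 := hef 2 1 (by decide) hei0
      have h3 := hef 2 3 (by decide) hei0
      exact mul_ne_zero h1.1 (mul_ne_zero (mul_ne_zero h1.2 h2.2) h3.2)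
        (by linear_combination hc1 - (e 0 * e 1 * f 3 + e 0 * f 1 * e 3 + f 0 * e 1 * e 3) * hei0)
    · have hei0 : e 3 = 0 := hei
      have h1 := hef 3 0 (by decide) hei0
      have h2 := hef 3 1 (by decide) hei0
      have h3 := hef 3 2 (by decide) hei0
      exact mul_ne_zero h1.1 (mul_ne_zero (mul_ne_zero h1.2 h2.2) h3.2)
        (by linear_combination hc1 - (e 0 * e 1 * f 2 + e 0 * f 1 * e 2 + f 0 * e 1 * e 2) * hei0)
  have hc0ne : c 0 ≠ 0 := by
    rw [hc0]
    exact mul_ne_zero (mul_ne_zero (mul_ne_zero (he 0) (he 1)) (he 2)) (he 3)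
  -- roots
  set r0 : ℝ := -f 0 / e 0 with hr0
  set r1 : ℝ := -f 1 / e 1 with hr1
  set r2 : ℝ := -f 2 / e 2 with hr2
  -- root equations
  have hq : ∀ (i : Fin 4) (t : ℝ), e i * t + f i = 0 → c 0 * t^4 + c 2 * t^2 + c 4 = 0 := by
    intro i t hit
    have hp := hprod t 1
    norm_num [Finset.sum_range_succ] at hp
    rw [Finset.prod_eq_zero (Finset.mem_univ i) (by simpa using hit)] at hp
    rw [hc1, hc3] at hp
    linarith [hp]
  have hroot : ∀ i : Fin 4, e i * (-f i / e i) + f i = 0 := by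
    intro i; rw [mul_comm, div_mul_cancel₀ _ (he i)]; ring
  have hq0 := hq 0 r0 (hroot 0)
  have hq1 := hq 1 r1 (hroot 1)
  have hq2 := hq 2 r2 (hroot 2)
  -- distinctness
  have hdist : ∀ i j : Fin 4, i ≠ j → -f i / e i ≠ -f j / e j := by
    intro i j hij hEq
    apply hind i j hij
    rw [div_eq_div_iff (he i) (he j)] at hEq
    linear_combination hEq
  -- two roots with distinct squares
  have hsq : ∃ u v : ℝ, u^2 ≠ v^2 ∧ (c 0 * u^4 + c 2 * u^2 + c 4 = 0)
      ∧ (c 0 * v^4 + c 2 * v^2 + c 4 = 0) := by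
    by_cases h01 : r0^2 = r1^2
    · refine ⟨r0, r2, ?_, hq0, hq2⟩
      intro h02
      have hn1 : r1 = -r0 := by
        have hne : r0 ≠ r1 := hdist 0 1 (by decide)
        have h := (mul_eq_zero.mp (by linear_combination h01 :
          (r0 - r1) * (r0 + r1) = 0)).resolve_left (sub_ne_zero.mpr hne)
        linarith
      have hn2 : r2 = -r0 := by
        have hne : r0 ≠ r2 := hdist 0 2 (by decide)
        have h := (mul_eq_zero.mp (by linear_combination h02 :
          (r0 - r2) * (r0 + r2) = 0)).resolve_left (sub_ne_zero.mpr hne)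
        linarith
      exact hdist 1 2 (by decide) (by rw [← hr1, ← hr2, hn1, hn2])
    · exact ⟨r0, r1, h01, hq0, hq1⟩
  obtain ⟨u, v, huv, hQu, hQv⟩ := hsq
  have hA : (u^2 - v^2) * (c 0 * (u^2 + v^2) + c 2) = 0 := by linear_combination hQu - hQv
  have hA' : c 0 * (u^2 + v^2) + c 2 = 0 :=
    (mul_eq_zero.mp hA).resolve_left (sub_ne_zero.mpr huv)
  have hB' : c 4 - c 0 * (u^2 * v^2) = 0 := by linear_combination hQu - u^2 * hA'
  have hfac : c 0 * (1 - l * (u^2 + v^2) + u^2 * v^2) = 0 := by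
    linear_combination hk2 - l * hA' - hB'
  have hfac' := (mul_eq_zero.mp hfac).resolve_left hc0ne
  nlinarith [sq_nonneg u, sq_nonneg v, sq_nonneg (u*v),
    mul_nonneg (neg_nonneg.mpr hl2) (add_nonneg (sq_nonneg u) (sq_nonneg v))]


open Polynomial

lemma aux_pow6 (a b : ℝ) : (C a * X + C b)^6 =
    C (b^6) + C (6*a*b^5) * X + C (15*a^2*b^4) * X^2 + C (20*a^3*b^3) * X^3
    + C (15*a^4*b^2) * X^4 + C (6*a^5*b) * X^5 + C (a^6) * X^6 := by
  simp only [map_mul, map_pow, map_ofNat]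
  ring

lemma aux2 (l : ℝ) (hl1 : -3/5 < l) (hl2 : l ≤ 0)
    (h1 : ¬ ∃ (c : ℕ → ℝ) (e f : Fin 4 → ℝ),
        (∀ i j, i ≠ j → e i * f j - e j * f i ≠ 0) ∧
        (∀ x y : ℝ, ∑ i ∈ Finset.range 5, c i * x^(4-i) * y^i
          = ∏ i : Fin 4, (e i * x + f i * y)) ∧
        c 1 + l * c 3 = 0 ∧ c 0 + l * c 2 + c 4 = 0 ∧ l * c 1 + c 3 = 0)
    (r : ℕ) (lam α β : Fin r → ℝ)
    (hlam : ∀ k, lam k ≠ 0)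
    (hpair : ∀ k m, k ≠ m → α k * β m - α m * β k ≠ 0)
    (hrep : ∀ x y : ℝ, 6*x^5*y + 20*l*x^3*y^3 + 6*x*y^5
          = ∑ k : Fin r, lam k * (α k * x + β k * y)^6) : 5 ≤ r := by
  by_contra hlt
  push_neg at hlt
  have hr4 : r ≤ 4 := by omega
  -- each form is nonzero
  have hnz : ∀ k : Fin r, ¬(α k = 0 ∧ β k = 0) := by
    rintro k ⟨ha, hb⟩
    rcases eq_or_lt_of_le (Nat.one_le_iff_ne_zero.mpr (Nat.pos_iff_ne_zero.mp k.pos)) with h1r | h1r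
    · -- r = 1
      have hr := hrep 1 1
      have hk0 : ∀ m : Fin r, m = k := by
        intro m; apply Fin.ext; omega
      rw [show (Finset.univ : Finset (Fin r)) = {k} by
        apply Finset.eq_singleton_iff_unique_mem.mpr
        exact ⟨Finset.mem_univ k, fun m _ => hk0 m⟩] at hr
      rw [Finset.sum_singleton, ha, hb] at hr
      norm_num at hr
      linarith
    · -- r ≥ 2
      have : Nontrivial (Fin r) := Fin.nontrivial_iff_two_le.mpr h1r
      obtain ⟨m, hm⟩ := exists_ne k
      exact hpair k m (Ne.symm hm) (by rw [ha, hb]; ring)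
  -- polynomial identity and moment equations
  have hPQ : (C 6 * X^5 + C (20*l) * X^3 + C 6 * X : ℝ[X])
      = ∑ k : Fin r, C (lam k) * (C (α k) * X + C (β k))^6 := by
    apply Polynomial.funext
    intro x
    have h := hrep x 1
    simp only [eval_add, eval_mul, eval_pow, eval_C, eval_X, eval_finset_sum]
    norm_num at h ⊢
    linear_combination h
  have hco : ∀ n : ℕ, (C 6 * X^5 + C (20*l) * X^3 + C 6 * X : ℝ[X]).coeff n
      = ∑ k : Fin r, lam k * (((C (α k) * X + C (β k))^6).coeff n) := by
    intro n
    rw [hPQ, Polynomial.finset_sum_coeff]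
    exact Finset.sum_congr rfl fun k _ => coeff_C_mul _
  have h6 := hco 6
  have h5 := hco 5
  have h4 := hco 4
  have h3 := hco 3
  have h2 := hco 2
  have h1' := hco 1
  have h0 := hco 0
  simp only [aux_pow6, coeff_add, coeff_C_mul, coeff_X_pow, coeff_C, coeff_X]
    at h6 h5 h4 h3 h2 h1' h0
  norm_num at h6 h5 h4 h3 h2 h1' h0
  have hm6 : ∑ k : Fin r, lam k * α k^6 = 0 := h6.symm
  have hm0 : ∑ k : Fin r, lam k * β k^6 = 0 := h0.symm
  have hm5 : ∑ k : Fin r, lam k * (α k^5 * β k) = 1 := by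
    have hs : ∑ k : Fin r, lam k * (6 * α k^5 * β k)
        = 6 * ∑ k : Fin r, lam k * (α k^5 * β k) := by
      rw [Finset.mul_sum]; exact Finset.sum_congr rfl fun k _ => by ring
    rw [hs] at h5; linarith
  have hm4 : ∑ k : Fin r, lam k * (α k^4 * β k^2) = 0 := by
    have hs : ∑ k : Fin r, lam k * (15 * α k^4 * β k^2)
        = 15 * ∑ k : Fin r, lam k * (α k^4 * β k^2) := by
      rw [Finset.mul_sum]; exact Finset.sum_congr rfl fun k _ => by ring
    rw [hs] at h4; linarith
  have hm3 : ∑ k : Fin r, lam k * (α k^3 * β k^3) = l := by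
    have hs : ∑ k : Fin r, lam k * (20 * α k^3 * β k^3)
        = 20 * ∑ k : Fin r, lam k * (α k^3 * β k^3) := by
      rw [Finset.mul_sum]; exact Finset.sum_congr rfl fun k _ => by ring
    rw [hs] at h3; linarith
  have hm2 : ∑ k : Fin r, lam k * (α k^2 * β k^4) = 0 := by
    have hs : ∑ k : Fin r, lam k * (15 * α k^2 * β k^4)
        = 15 * ∑ k : Fin r, lam k * (α k^2 * β k^4) := by
      rw [Finset.mul_sum]; exact Finset.sum_congr rfl fun k _ => by ring
    rw [hs] at h2; linarith
  have hm1 : ∑ k : Fin r, lam k * (α k * β k^5) = 1 := by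
    have hs : ∑ k : Fin r, lam k * (6 * α k * β k^5)
        = 6 * ∑ k : Fin r, lam k * (α k * β k^5) := by
      rw [Finset.mul_sum]; exact Finset.sum_congr rfl fun k _ => by ring
    rw [hs] at h1'; linarith
  -- choose fresh slopes
  let bad : Finset ℝ := Finset.image (fun k => -α k / β k) Finset.univ
  let bigbad : Finset ℝ := Finset.biUnion (Finset.range 4)
    (fun n => Finset.image (fun x => x - (n : ℝ)) bad)
  obtain ⟨T, hT⟩ := Infinite.exists_notMem_finset bigbad
  let t : Fin 4 → ℝ := fun m => T + (m : ℕ)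
  have htbad : ∀ m : Fin 4, t m ∉ bad := by
    intro m hmem
    apply hT
    exact Finset.mem_biUnion.mpr ⟨(m : ℕ), Finset.mem_range.mpr m.isLt,
      Finset.mem_image.mpr ⟨T + (m : ℕ), hmem, by ring⟩⟩
  have htinj : ∀ i j : Fin 4, i ≠ j → t i ≠ t j := by
    intro i j hij h
    apply hij
    have : ((i : ℕ) : ℝ) = ((j : ℕ) : ℝ) := by
      simpa [t] using h
    exact Fin.ext (Nat.cast_injective this)
  have hfresh : ∀ (k : Fin r) (m : Fin 4), β k * t m + α k ≠ 0 := by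
    intro k m h
    by_cases hb : β k = 0
    · rw [hb] at h
      exact hnz k ⟨by linarith, hb⟩
    · apply htbad m
      have : t m = -α k / β k := by field_simp; linarith
      exact Finset.mem_image.mpr ⟨k, Finset.mem_univ k, this.symm⟩
  -- the four linear forms
  let e : Fin 4 → ℝ := fun i => if h : (i : ℕ) < r then β ⟨i, h⟩ else 1
  let f : Fin 4 → ℝ := fun i => if h : (i : ℕ) < r then -α ⟨i, h⟩ else t i
  have hpair4 : ∀ i j : Fin 4, i ≠ j → e i * f j - e j * f i ≠ 0 := by
    intro i j hij
    by_cases hi : (i : ℕ) < r <;> by_cases hj : (j : ℕ) < r <;>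
      simp only [e, f, dif_pos, dif_neg, hi, hj, dite_true, dite_false]
    · -- both old forms
      intro h
      apply hpair ⟨i, hi⟩ ⟨j, hj⟩ (by simp [Fin.ext_iff]; exact fun hh => hij (Fin.ext hh))
      linear_combination h
    · exact fun h => hfresh ⟨i, hi⟩ j (by linear_combination h)
    · exact fun h => hfresh ⟨j, hj⟩ i (by linear_combination -h)
    · exact fun h => htinj j i (Ne.symm hij) (by linarith)
  have hvanish : ∀ k : Fin r, e ⟨k.1, lt_of_lt_of_le k.2 hr4⟩ * α k
      + f ⟨k.1, lt_of_lt_of_le k.2 hr4⟩ * β k = 0 := by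
    intro k
    have hk : ((⟨k.1, lt_of_lt_of_le k.2 hr4⟩ : Fin 4) : ℕ) < r := k.2
    simp only [e, f, dif_pos hk]
    have : (⟨((⟨k.1, lt_of_lt_of_le k.2 hr4⟩ : Fin 4) : ℕ), hk⟩ : Fin r) = k := Fin.ext rfl
    rw [this]; ring
  -- coefficients of the quartic
  let c : ℕ → ℝ := fun j =>
    if j = 0 then e 0 * e 1 * e 2 * e 3
    else if j = 1 then e 0 * e 1 * e 2 * f 3 + e 0 * e 1 * f 2 * e 3
      + e 0 * f 1 * e 2 * e 3 + f 0 * e 1 * e 2 * e 3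
    else if j = 2 then e 0 * e 1 * f 2 * f 3 + e 0 * f 1 * e 2 * f 3 + e 0 * f 1 * f 2 * e 3
      + f 0 * e 1 * e 2 * f 3 + f 0 * e 1 * f 2 * e 3 + f 0 * f 1 * e 2 * e 3
    else if j = 3 then e 0 * f 1 * f 2 * f 3 + f 0 * e 1 * f 2 * f 3
      + f 0 * f 1 * e 2 * f 3 + f 0 * f 1 * f 2 * e 3
    else if j = 4 then f 0 * f 1 * f 2 * f 3
    else 0
  have hcprod : ∀ x y : ℝ, ∑ i ∈ Finset.range 5, c i * x^(4-i) * y^i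
      = ∏ i : Fin 4, (e i * x + f i * y) := by
    intro x y
    norm_num [c, Finset.sum_range_succ, Fin.prod_univ_four]
    ring
  -- kernel conditions
  have hpk : ∀ k : Fin r, c 0 * α k^4 + c 1 * (α k^3 * β k) + c 2 * (α k^2 * β k^2)
      + c 3 * (α k * β k^3) + c 4 * β k^4 = 0 := by
    intro k
    have hp := hcprod (α k) (β k)
    have hz : (∏ i : Fin 4, (e i * α k + f i * β k)) = 0 :=
      Finset.prod_eq_zero (Finset.mem_univ ⟨k.1, lt_of_lt_of_le k.2 hr4⟩) (hvanish k)
    rw [hz] at hp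
    norm_num [Finset.sum_range_succ] at hp
    linear_combination hp
  have key0 : c 0 * (∑ k : Fin r, lam k * α k^6) + c 1 * (∑ k : Fin r, lam k * (α k^5 * β k))
      + c 2 * (∑ k : Fin r, lam k * (α k^4 * β k^2)) + c 3 * (∑ k : Fin r, lam k * (α k^3 * β k^3))
      + c 4 * (∑ k : Fin r, lam k * (α k^2 * β k^4)) = 0 := by
    rw [Finset.mul_sum, Finset.mul_sum, Finset.mul_sum, Finset.mul_sum, Finset.mul_sum,
      ← Finset.sum_add_distrib, ← Finset.sum_add_distrib, ← Finset.sum_add_distrib,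
      ← Finset.sum_add_distrib]
    exact Finset.sum_eq_zero fun k _ => by linear_combination (lam k * α k^2) * hpk k
  have key1 : c 0 * (∑ k : Fin r, lam k * (α k^5 * β k)) + c 1 * (∑ k : Fin r, lam k * (α k^4 * β k^2))
      + c 2 * (∑ k : Fin r, lam k * (α k^3 * β k^3)) + c 3 * (∑ k : Fin r, lam k * (α k^2 * β k^4))
      + c 4 * (∑ k : Fin r, lam k * (α k * β k^5)) = 0 := by
    rw [Finset.mul_sum, Finset.mul_sum, Finset.mul_sum, Finset.mul_sum, Finset.mul_sum,
      ← Finset.sum_add_distrib, ← Finset.sum_add_distrib, ← Finset.sum_add_distrib,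
      ← Finset.sum_add_distrib]
    exact Finset.sum_eq_zero fun k _ => by linear_combination (lam k * (α k * β k)) * hpk k
  have key2 : c 0 * (∑ k : Fin r, lam k * (α k^4 * β k^2)) + c 1 * (∑ k : Fin r, lam k * (α k^3 * β k^3))
      + c 2 * (∑ k : Fin r, lam k * (α k^2 * β k^4)) + c 3 * (∑ k : Fin r, lam k * (α k * β k^5))
      + c 4 * (∑ k : Fin r, lam k * β k^6) = 0 := by
    rw [Finset.mul_sum, Finset.mul_sum, Finset.mul_sum, Finset.mul_sum, Finset.mul_sum,
      ← Finset.sum_add_distrib, ← Finset.sum_add_distrib, ← Finset.sum_add_distrib,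
      ← Finset.sum_add_distrib]
    exact Finset.sum_eq_zero fun k _ => by linear_combination (lam k * (β k * β k)) * hpk k
  apply h1
  refine ⟨c, e, f, hpair4, hcprod, ?_, ?_, ?_⟩
  · linear_combination key0 - c 0 * hm6 - c 1 * hm5 - c 2 * hm4 - c 3 * hm3 - c 4 * hm2
  · linear_combination key1 - c 0 * hm5 - c 1 * hm4 - c 2 * hm3 - c 3 * hm2 - c 4 * hm1
  · linear_combination key2 - c 0 * hm4 - c 1 * hm3 - c 2 * hm2 - c 3 * hm1 - c 4 * hm0

theorem stmt17 (l : ℝ) (hl1 : -3/5 < l) (hl2 : l ≤ 0) :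
    (¬ ∃ (c : ℕ → ℝ) (e f : Fin 4 → ℝ),
        (∀ i j, i ≠ j → e i * f j - e j * f i ≠ 0) ∧
        (∀ x y : ℝ, ∑ i ∈ Finset.range 5, c i * x^(4-i) * y^i
          = ∏ i : Fin 4, (e i * x + f i * y)) ∧
        c 1 + l * c 3 = 0 ∧ c 0 + l * c 2 + c 4 = 0 ∧ l * c 1 + c 3 = 0) ∧
    (∀ (r : ℕ) (lam α β : Fin r → ℝ),
        (∀ k, lam k ≠ 0) →
        (∀ k m, k ≠ m → α k * β m - α m * β k ≠ 0) →
        (∀ x y : ℝ, 6*x^5*y + 20*l*x^3*y^3 + 6*x*y^5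
          = ∑ k : Fin r, lam k * (α k * x + β k * y)^6) →
        5 ≤ r) :=
  ⟨aux1 l hl1 hl2, fun r lam α β hlam hpair hrep =>
    aux2 l hl1 hl2 (aux1 l hl1 hl2) r lam α β hlam hpair hrep⟩
end
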